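/- arXiv:2107.12084 — 9 statements merged into one kernel-verified Lean document; each statement's English description precedes it below -/
import Mathlib

section
/- For each r ∈ {l,u} one has f_{r,x̄}(x̄) ≤ 0. Moreover, f_{l,x̄}(x̄) = 0 whenever WMin(F(x̄),K) ≠ ∅, and f_{u,x̄}(x̄) = 0 whenever WMax(F(x̄),K) ≠ ∅. -/
open Set Topology Metric

/-- The Gerstewitz (Tammer) scalarizing functional `Ψ_e(y) = inf {t : y ∈ t•e - K}`. -/
noncomputable def psiE {Y : Type*} [NormedAddCommGroup Y] [NormedSpace ℝ Y]
    (K : Set Y) (e : Y) (y : Y) : ℝ :=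
  sInf {t : ℝ | t • e - y ∈ K}

/-- The lower inner function `g_l(x,z) = inf_{y ∈ F x} Ψ_e (y - z)` (with values in `EReal`). -/
noncomputable def glow {X Y : Type*} [NormedAddCommGroup X] [NormedSpace ℝ X]
    [NormedAddCommGroup Y] [NormedSpace ℝ Y]
    (K : Set Y) (e : Y) (F : X → Set Y) (x : X) (z : Y) : EReal :=
  ⨅ y ∈ F x, (psiE K e (y - z) : EReal)

/-- The upper inner function `g_{u,x̄}(y) = inf_{ȳ ∈ F x̄} Ψ_e (y - ȳ)`. -/
noncomputable def gupp {X Y : Type*} [NormedAddCommGroup X] [NormedSpace ℝ X]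
    [NormedAddCommGroup Y] [NormedSpace ℝ Y]
    (K : Set Y) (e : Y) (F : X → Set Y) (xbar : X) (y : Y) : EReal :=
  ⨅ yb ∈ F xbar, (psiE K e (y - yb) : EReal)

/-- The lower scalarizing functional `f_{l,x̄}(x) = sup_{ȳ ∈ F x̄} g_l(x, ȳ)`. -/
noncomputable def flow {X Y : Type*} [NormedAddCommGroup X] [NormedSpace ℝ X]
    [NormedAddCommGroup Y] [NormedSpace ℝ Y]
    (K : Set Y) (e : Y) (F : X → Set Y) (xbar : X) (x : X) : EReal :=
  ⨆ yb ∈ F xbar, glow K e F x yb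

/-- The upper scalarizing functional `f_{u,x̄}(x) = sup_{y ∈ F x} g_{u,x̄}(y)`. -/
noncomputable def fupp {X Y : Type*} [NormedAddCommGroup X] [NormedSpace ℝ X]
    [NormedAddCommGroup Y] [NormedSpace ℝ Y]
    (K : Set Y) (e : Y) (F : X → Set Y) (xbar : X) (x : X) : EReal :=
  ⨆ y ∈ F x, gupp K e F xbar y

/-- Weakly minimal elements: `WMin(A,K) = {a ∈ A : (a - int K) ∩ A = ∅}`. -/
def wMinSet {Y : Type*} [NormedAddCommGroup Y] (A K : Set Y) : Set Y :=
  {a ∈ A | ∀ b ∈ A, a - b ∉ interior K}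

/-- Weakly maximal elements: `WMax(A,K) = {a ∈ A : (a + int K) ∩ A = ∅}`. -/
def wMaxSet {Y : Type*} [NormedAddCommGroup Y] (A K : Set Y) : Set Y :=
  {a ∈ A | ∀ b ∈ A, b - a ∉ interior K}

/-- Minimal elements: `Min(A,K) = {a ∈ A : (a - K) ∩ A = {a}}`. -/
def minSet {Y : Type*} [AddGroup Y] (A K : Set Y) : Set Y :=
  {a ∈ A | ∀ b ∈ A, a - b ∈ K → b = a}

/-- f_{r,x̄}(x̄) ≤ 0, with equality under nonemptiness of WMin / WMax. -/
theorem stmt2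
    {X Y : Type*} [NormedAddCommGroup X] [NormedSpace ℝ X] [CompleteSpace X]
    [NormedAddCommGroup Y] [NormedSpace ℝ Y] [CompleteSpace Y]
    (K : Set Y) (e : Y) (F : X → Set Y) (Ω : Set X) (xbar : X)
    (hKcl : IsClosed K) (hKcv : Convex ℝ K)
    (hKcone : ∀ t : ℝ, 0 ≤ t → ∀ y ∈ K, t • y ∈ K)
    (hKpt : K ∩ (-K) = {0})
    (he : e ∈ interior K)
    (hΩne : Ω.Nonempty) (hΩcl : IsClosed Ω)
    (hΩdom : Ω ⊆ interior {x | (F x).Nonempty})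
    (hxΩ : xbar ∈ Ω) :
    flow K e F xbar xbar ≤ 0 ∧ fupp K e F xbar xbar ≤ 0 ∧
    ((wMinSet (F xbar) K).Nonempty → flow K e F xbar xbar = 0) ∧
    ((wMaxSet (F xbar) K).Nonempty → fupp K e F xbar xbar = 0) := by

  have h0K : (0:Y) ∈ K := by
    have h : (0:Y) ∈ K ∩ (-K) := by rw [hKpt]; rfl
    exact h.1
  have hKadd : ∀ a ∈ K, ∀ b ∈ K, a + b ∈ K := by
    intro a ha b hb
    have h := hKcv ha hb (by norm_num : (0:ℝ) ≤ 1/2) (by norm_num : (0:ℝ) ≤ 1/2)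
      (by norm_num)
    have h2 := hKcone 2 (by norm_num) _ h
    have : (2:ℝ) • ((1/2:ℝ) • a + (1/2:ℝ) • b) = a + b := by module
    rwa [this] at h2
  have hIntAdd : ∀ k ∈ K, ∀ u ∈ interior K, k + u ∈ interior K := by
    intro k hk u hu
    have hopen : IsOpen ((k + ·) '' interior K) :=
      (Homeomorph.addLeft k).isOpenMap _ isOpen_interior
    have hsub : (k + ·) '' interior K ⊆ K := by
      rintro _ ⟨v, hv, rfl⟩
      exact hKadd k hk v (interior_subset hv)
    exact interior_maximal hsub hopen ⟨u, hu, rfl⟩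
  have hSmulInt : ∀ t : ℝ, 0 < t → t • e ∈ interior K := by
    intro t ht
    have hopen : IsOpen ((t • ·) '' interior K) :=
      (Homeomorph.smulOfNeZero t ht.ne').isOpenMap _ isOpen_interior
    have hsub : (t • ·) '' interior K ⊆ K := by
      rintro _ ⟨v, hv, rfl⟩
      exact hKcone t ht.le v (interior_subset hv)
    exact interior_maximal hsub hopen ⟨e, he, rfl⟩
  have hpsi0 : psiE K e 0 ≤ 0 := by
    have h0 : (0:ℝ) ∈ {t : ℝ | t • e - (0:Y) ∈ K} := by
      simp [h0K]
    unfold psiE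
    simp only [sub_zero] at h0 ⊢
    by_cases hb : BddBelow {t : ℝ | t • e ∈ K}
    · exact csInf_le hb h0
    · rw [Real.sInf_of_not_bddBelow hb]
  -- key: if a - y ∉ interior K then 0 ≤ psiE K e (y - a)
  have hkey : ∀ a y : Y, a - y ∉ interior K → 0 ≤ psiE K e (y - a) := by
    intro a y hay
    apply Real.sInf_nonneg
    intro t ht
    by_contra hlt
    push_neg at hlt
    have hte : (-t) • e ∈ interior K := hSmulInt (-t) (by linarith)
    have hmem : (t • e - (y - a)) + (-t) • e ∈ interior K := hIntAdd _ ht _ hte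
    have heq : (t • e - (y - a)) + (-t) • e = a - y := by module
    rw [heq] at hmem
    exact hay hmem
  have hflow_le : flow K e F xbar xbar ≤ 0 := by
    refine iSup₂_le fun yb hyb => ?_
    refine (iInf₂_le yb hyb).trans ?_
    rw [sub_self]
    exact_mod_cast hpsi0
  have hfupp_le : fupp K e F xbar xbar ≤ 0 := by
    refine iSup₂_le fun y hy => ?_
    refine (iInf₂_le y hy).trans ?_
    rw [sub_self]
    exact_mod_cast hpsi0
  refine ⟨hflow_le, hfupp_le, ?_, ?_⟩
  · rintro ⟨a, haA, haMin⟩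
    refine le_antisymm hflow_le ?_
    refine le_trans ?_
      (le_iSup₂ (f := fun yb (_ : yb ∈ F xbar) => glow K e F xbar yb) a haA)
    refine le_iInf₂ fun y hy => ?_
    have h := hkey a y (haMin y hy)
    exact_mod_cast h
  · rintro ⟨a, haA, haMax⟩
    refine le_antisymm hfupp_le ?_
    refine le_trans ?_
      (le_iSup₂ (f := fun y (_ : y ∈ F xbar) => gupp K e F xbar y) a haA)
    refine le_iInf₂ fun yb hyb => ?_
    have h : 0 ≤ psiE K e (a - yb) := hkey yb a (haMax yb hyb)
    exact_mod_cast h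
end

section
/- If F is ⪯ˡ_K-convex, then for every ȳ ∈ F(x̄) the function x ↦ g_l(x,ȳ) is convex. If moreover F is locally l-bounded at x̄, then x̄ belongs to the interior of the effective domain of g_l(·,ȳ), and g_l(·,ȳ) is finite and continuous at x̄. -/
open Set Topology Metric Pointwise

lemma psiE_props {Y : Type*} [NormedAddCommGroup Y] [NormedSpace ℝ Y] (K : Set Y) (e : Y)
    (hKcl : IsClosed K) (hKcv : Convex ℝ K)
    (hKcone : ∀ t : ℝ, 0 ≤ t → ∀ y ∈ K, t • y ∈ K)
    (hKpt : K ∩ (-K) = {0}) (he : e ∈ interior K) :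
    (∀ (a k : Y), k ∈ K → psiE K e a ≤ psiE K e (a + k)) ∧
    (∀ (a b : Y) (t : ℝ), 0 ≤ t → t ≤ 1 →
      psiE K e (t • a + (1-t) • b) ≤ t * psiE K e a + (1-t) * psiE K e b) := by
  have h0K : (0:Y) ∈ K := by
    have h : (0:Y) ∈ ({0} : Set Y) := rfl
    rw [← hKpt] at h; exact h.1
  have heK : e ∈ K := interior_subset he
  have hadd : ∀ a ∈ K, ∀ b ∈ K, a + b ∈ K := by
    intro a ha b hb
    have h1 : (1/2 : ℝ) • a + (1/2 : ℝ) • b ∈ K :=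
      hKcv ha hb (by norm_num) (by norm_num) (by norm_num)
    have h2 := hKcone 2 (by norm_num) _ h1
    have h3 : (2:ℝ) • ((1/2 : ℝ) • a + (1/2 : ℝ) • b) = a + b := by
      rw [smul_add, smul_smul, smul_smul]; norm_num
    rwa [h3] at h2
  rcases subsingleton_or_nontrivial Y with hY | hY
  · have hpsi : ∀ y : Y, psiE K e y = 0 := by
      intro y
      have hset : {t : ℝ | t • e - y ∈ K} = univ := by
        ext t; simp only [mem_setOf_eq, mem_univ, iff_true]
        have h : t • e - y = 0 := Subsingleton.elim _ _
        rw [h]; exact h0K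
      rw [psiE, hset]
      exact Real.sInf_of_not_bddBelow not_bddBelow_univ
    refine ⟨fun a k _ => by rw [hpsi, hpsi], fun a b t ht0 ht1 => by rw [hpsi, hpsi, hpsi]; norm_num⟩
  · -- nontrivial case
    have hnegE : -e ∉ K := by
      intro hneg
      have he0 : e = 0 := by
        have h : e ∈ K ∩ (-K) := ⟨heK, by simpa using hneg⟩
        rw [hKpt] at h; exact h
      obtain ⟨δ, hδ, hball⟩ := Metric.isOpen_iff.mp isOpen_interior e he
      have hK_all : ∀ z : Y, z ∈ K := by
        intro z
        rcases eq_or_ne z 0 with rfl | hz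
        · exact h0K
        · have hz0 : (0:ℝ) < ‖z‖ := norm_pos_iff.mpr hz
          have h1 : (δ/2/‖z‖) • z ∈ K := by
            apply interior_subset; apply hball
            rw [mem_ball, dist_eq_norm, he0, sub_zero, norm_smul, Real.norm_eq_abs,
              abs_of_pos (by positivity), div_mul_cancel₀ _ (ne_of_gt hz0)]
            linarith
          have h2 := hKcone (‖z‖ * (2/δ)) (by positivity) _ h1
          rwa [smul_smul, show ‖z‖ * (2/δ) * (δ/2/‖z‖) = 1 by field_simp, one_smul] at h2
      obtain ⟨y, hy⟩ := exists_ne (0 : Y)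
      have h : y ∈ ({0} : Set Y) := by
        rw [← hKpt]; exact ⟨hK_all y, by simpa using hK_all (-y)⟩
      exact hy h
    have hSne : ∀ y : Y, {t : ℝ | t • e - y ∈ K}.Nonempty := by
      intro y
      obtain ⟨δ, hδ, hball⟩ := Metric.isOpen_iff.mp isOpen_interior e he
      refine ⟨‖y‖/δ + 1, ?_⟩
      have ht : 0 < ‖y‖/δ + 1 := by positivity
      have h1 : e - (‖y‖/δ + 1)⁻¹ • y ∈ K := by
        apply interior_subset; apply hball
        rw [mem_ball, dist_eq_norm]
        have heq : e - (‖y‖/δ + 1)⁻¹ • y - e = -((‖y‖/δ + 1)⁻¹ • y) := by abel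
        rw [heq, norm_neg, norm_smul, Real.norm_eq_abs, abs_of_pos (by positivity)]
        rw [inv_mul_lt_iff₀ ht, add_mul, div_mul_cancel₀ _ (ne_of_gt hδ), one_mul]
        linarith
      have h2 := hKcone _ ht.le _ h1
      have h3 : (‖y‖/δ + 1) • (e - (‖y‖/δ + 1)⁻¹ • y) = (‖y‖/δ + 1) • e - y := by
        rw [smul_sub, smul_inv_smul₀ (ne_of_gt ht)]
      rw [h3] at h2
      exact h2
    have hB : ∀ y : Y, BddBelow {t : ℝ | t • e - y ∈ K} := by
      intro y
      obtain ⟨δ', hδ', hball'⟩ := Metric.isOpen_iff.mp hKcl.isOpen_compl (-e) hnegE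
      refine ⟨-(‖y‖/δ' + 1), fun t ht => ?_⟩
      by_contra hcon
      push_neg at hcon
      have h1 : 0 ≤ ‖y‖/δ' := by positivity
      have hst : 0 < -t := by linarith
      have h2 := hKcone (-t)⁻¹ (by positivity) _ ht
      have heq : (-t)⁻¹ • (t • e - y) = -e - (-t)⁻¹ • y := by
        rw [smul_sub, smul_smul, show (-t)⁻¹ * t = -1 by rw [inv_neg, neg_mul, inv_mul_cancel₀ (by linarith : t ≠ 0)], neg_one_smul]
      rw [heq] at h2
      have hmem : -e - (-t)⁻¹ • y ∈ ball (-e) δ' := by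
        rw [mem_ball, dist_eq_norm]
        have heq2 : -e - (-t)⁻¹ • y - (-e) = -((-t)⁻¹ • y) := by abel
        rw [heq2, norm_neg, norm_smul, Real.norm_eq_abs, abs_of_pos (by positivity)]
        rw [inv_mul_lt_iff₀ hst]
        have : ‖y‖/δ' < -t := by linarith
        calc ‖y‖ = (‖y‖/δ') * δ' := by field_simp
          _ < -t * δ' := by apply mul_lt_mul_of_pos_right this hδ'
      exact hball' hmem h2
    have hScl : ∀ y : Y, IsClosed {t : ℝ | t • e - y ∈ K} := by
      intro y
      exact hKcl.preimage ((continuous_id.smul continuous_const).sub continuous_const)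
    have hmem : ∀ y : Y, (psiE K e y) • e - y ∈ K := by
      intro y
      exact (hScl y).csInf_mem (hSne y) (hB y)
    constructor
    · intro a k hk
      apply csInf_le_csInf (hB a) (hSne (a+k))
      intro t ht
      simp only [mem_setOf_eq] at ht ⊢
      have heq : t • e - a = (t • e - (a+k)) + k := by abel
      rw [heq]; exact hadd _ ht _ hk
    · intro a b t ht0 ht1
      apply csInf_le (hB _)
      show (t * psiE K e a + (1-t) * psiE K e b) • e - (t • a + (1-t) • b) ∈ K
      have hkey : (t * psiE K e a + (1-t) * psiE K e b) • e - (t • a + (1-t) • b)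
          = t • ((psiE K e a) • e - a) + (1-t) • ((psiE K e b) • e - b) := by
        module
      rw [hkey]
      exact hKcv (hmem a) (hmem b) ht0 (by linarith) (by ring)

/-- if F is ⪯ˡ_K-convex then g_l(·,ȳ) is convex (epigraph convexity) for every
ȳ ∈ F(x̄); if moreover F is locally l-bounded at x̄, then x̄ lies in the interior of the
effective domain of g_l(·,ȳ) and g_l(·,ȳ) is finite and continuous at x̄. -/
theorem stmt3
    {X Y : Type*} [NormedAddCommGroup X] [NormedSpace ℝ X] [CompleteSpace X]
    [NormedAddCommGroup Y] [NormedSpace ℝ Y] [CompleteSpace Y]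
    (K : Set Y) (e : Y) (F : X → Set Y) (Ω : Set X) (xbar : X)
    (hKcl : IsClosed K) (hKcv : Convex ℝ K)
    (hKcone : ∀ t : ℝ, 0 ≤ t → ∀ y ∈ K, t • y ∈ K)
    (hKpt : K ∩ (-K) = {0})
    (he : e ∈ interior K)
    (hΩne : Ω.Nonempty) (hΩcl : IsClosed Ω)
    (hΩdom : Ω ⊆ interior {x | (F x).Nonempty})
    (hxΩ : xbar ∈ Ω)
    (hconv : ∀ x₁ x₂ : X, (F x₁).Nonempty → (F x₂).Nonempty → ∀ t : ℝ, t ∈ Set.Ioo (0:ℝ) 1 →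
      t • F x₁ + (1 - t) • F x₂ ⊆ F (t • x₁ + (1 - t) • x₂) + K) :
    (∀ ybar ∈ F xbar, Convex ℝ {p : X × ℝ | glow K e F p.1 ybar ≤ (p.2 : EReal)}) ∧
    ((∃ μ > (0:ℝ), ∃ U ∈ 𝓝 xbar, ∀ x ∈ U,
        (F x ∩ {y : Y | y + μ • e ∈ K ∧ μ • e - y ∈ K}) + K = F x + K) →
      ∀ ybar ∈ F xbar,
        xbar ∈ interior {x : X | glow K e F x ybar < ⊤} ∧
        glow K e F xbar ybar ≠ ⊥ ∧ glow K e F xbar ybar ≠ ⊤ ∧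
        ContinuousAt (fun x => glow K e F x ybar) xbar) := by
  obtain ⟨hmono, hconvψ⟩ := psiE_props K e hKcl hKcv hKcone hKpt he
  have h0K : (0:Y) ∈ K := by
    have h : (0:Y) ∈ ({0} : Set Y) := rfl
    rw [← hKpt] at h; exact h.1
  -- F x nonempty from glow ≤ coe
  have hne_of_le : ∀ (x : X) (z : Y) (r : ℝ), glow K e F x z ≤ (r : EReal) → (F x).Nonempty := by
    intro x z r h
    rw [nonempty_iff_ne_empty]
    intro hemp
    rw [glow, hemp] at h
    simp at h
  -- Part 1
  have part1 : ∀ ybar ∈ F xbar, Convex ℝ {p : X × ℝ | glow K e F p.1 ybar ≤ (p.2 : EReal)} := by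
    intro ybar _ p hp q hq a b ha hb hab
    simp only [mem_setOf_eq] at hp hq ⊢
    rcases ha.eq_or_lt with rfl | ha0
    · have hb1 : b = 1 := by linarith
      subst hb1
      simpa using hq
    rcases hb.eq_or_lt with rfl | hb0
    · have ha1 : a = 1 := by linarith
      subst ha1
      simpa using hp
    have hba : b = 1 - a := by linarith
    subst hba
    have hne1 : (F p.1).Nonempty := hne_of_le _ _ _ hp
    have hne2 : (F q.1).Nonempty := hne_of_le _ _ _ hq
    simp only [Prod.fst_add, Prod.snd_add, Prod.smul_fst, Prod.smul_snd, smul_eq_mul]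
    set r : ℝ := a * p.2 + (1-a) * q.2 with hr
    by_contra hcon
    push_neg at hcon
    obtain ⟨s, hs1, hs2⟩ := EReal.exists_between_coe_real hcon
    set ε : ℝ := s - r with hε
    have hε0 : 0 < ε := by
      have := EReal.coe_lt_coe_iff.mp hs1
      simp only [hε]; linarith
    -- extract near-infimum points
    have hlt1 : glow K e F p.1 ybar < ((p.2 + ε : ℝ) : EReal) :=
      lt_of_le_of_lt hp (by exact_mod_cast lt_add_of_pos_right _ hε0)
    rw [glow] at hlt1
    obtain ⟨y₁, h1⟩ := iInf_lt_iff.mp hlt1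
    obtain ⟨hy₁, h1'⟩ := iInf_lt_iff.mp h1
    have hp1 : psiE K e (y₁ - ybar) < p.2 + ε := by exact_mod_cast h1'
    have hlt2 : glow K e F q.1 ybar < ((q.2 + ε : ℝ) : EReal) :=
      lt_of_le_of_lt hq (by exact_mod_cast lt_add_of_pos_right _ hε0)
    rw [glow] at hlt2
    obtain ⟨y₂, h2⟩ := iInf_lt_iff.mp hlt2
    obtain ⟨hy₂, h2'⟩ := iInf_lt_iff.mp h2
    have hp2 : psiE K e (y₂ - ybar) < q.2 + ε := by exact_mod_cast h2'
    have hmem' : a • y₁ + (1-a) • y₂ ∈ a • F p.1 + (1-a) • F q.1 :=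
      Set.add_mem_add (smul_mem_smul_set hy₁) (smul_mem_smul_set hy₂)
    have hsub := hconv p.1 q.1 hne1 hne2 a ⟨ha0, by linarith⟩ hmem'
    obtain ⟨y, hy, k, hk, hyk⟩ := Set.mem_add.mp hsub
    have hkey : psiE K e (y - ybar) ≤ a * psiE K e (y₁ - ybar) + (1-a) * psiE K e (y₂ - ybar) := by
      have hm := hmono (y - ybar) k hk
      have heq : y - ybar + k = a • (y₁ - ybar) + (1-a) • (y₂ - ybar) := by
        have h' : y + k = a • y₁ + (1-a) • y₂ := hyk
        have : y - ybar + k = (y + k) - ybar := by abel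
        rw [this, h']
        module
      rw [heq] at hm
      exact hm.trans (hconvψ _ _ a ha0.le (by linarith))
    have hfin : psiE K e (y - ybar) ≤ s := by
      have e1 : a * psiE K e (y₁ - ybar) ≤ a * (p.2 + ε) :=
        mul_le_mul_of_nonneg_left hp1.le ha0.le
      have e2 : (1-a) * psiE K e (y₂ - ybar) ≤ (1-a) * (q.2 + ε) :=
        mul_le_mul_of_nonneg_left hp2.le (by linarith)
      have : a * (p.2 + ε) + (1-a) * (q.2 + ε) = r + ε := by rw [hr]; ring
      have hsr : r + ε = s := by rw [hε]; ring
      linarith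
    have : glow K e F (a • p.1 + (1-a) • q.1) ybar ≤ (s : EReal) := by
      refine le_trans (iInf₂_le y hy) ?_
      exact_mod_cast hfin
    exact absurd (lt_of_le_of_lt this hs2) (lt_irrefl _)
  refine ⟨part1, ?_⟩
  -- Part 2
  intro hlb ybar hybar
  obtain ⟨μ, hμ, U, hU, hbd⟩ := hlb
  set D := interior {x : X | (F x).Nonempty} with hD
  have hDopen : IsOpen D := isOpen_interior
  have hxD : xbar ∈ D := hΩdom hxΩ
  set c := psiE K e (-(μ • e) - ybar) with hc
  set C := psiE K e (μ • e - ybar) with hC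
  clear_value c C
  have hbound : ∀ x, x ∈ U → x ∈ D →
      (c : EReal) ≤ glow K e F x ybar ∧ glow K e F x ybar ≤ (C : EReal) := by
    intro x hxU hxD'
    have hFne : (F x).Nonempty := by
      have h' : x ∈ {x : X | (F x).Nonempty} := interior_subset hxD'
      exact h'
    have hid := hbd x hxU
    obtain ⟨y₀, hy₀⟩ := hFne
    have hy₀' : y₀ ∈ (F x ∩ {y : Y | y + μ • e ∈ K ∧ μ • e - y ∈ K}) + K := by
      rw [hid]; exact Set.mem_add.mpr ⟨y₀, hy₀, 0, h0K, add_zero y₀⟩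
    obtain ⟨y', hy', k', hk', hy'k⟩ := Set.mem_add.mp hy₀'
    constructor
    · rw [glow]
      refine le_iInf₂ fun y hy => ?_
      have hy2 : y ∈ (F x ∩ {y : Y | y + μ • e ∈ K ∧ μ • e - y ∈ K}) + K := by
        rw [hid]; exact Set.mem_add.mpr ⟨y, hy, 0, h0K, add_zero y⟩
      obtain ⟨y'', hy'', k'', hk'', heq⟩ := Set.mem_add.mp hy2
      have h1 : psiE K e (-(μ • e) - ybar) ≤ psiE K e (y'' - ybar) := by
        have hm := hmono (-(μ • e) - ybar) (y'' + μ • e) hy''.2.1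
        have heq2 : -(μ • e) - ybar + (y'' + μ • e) = y'' - ybar := by abel
        rwa [heq2] at hm
      have h2 : psiE K e (y'' - ybar) ≤ psiE K e (y - ybar) := by
        have hm := hmono (y'' - ybar) k'' hk''
        have heq2 : y'' - ybar + k'' = y - ybar := by rw [← heq]; abel
        rwa [heq2] at hm
      rw [hc]; exact_mod_cast h1.trans h2
    · refine le_trans (iInf₂_le y' hy'.1) ?_
      have hm := hmono (y' - ybar) (μ • e - y') hy'.2.2
      have heq2 : y' - ybar + (μ • e - y') = μ • e - ybar := by abel
      rw [heq2] at hm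
      rw [hC]; exact_mod_cast hm
  have hVmem : U ∩ D ∈ 𝓝 xbar := Filter.inter_mem hU (hDopen.mem_nhds hxD)
  have hxU : xbar ∈ U := mem_of_mem_nhds hU
  have hfinb := hbound xbar hxU hxD
  refine ⟨?_, ?_, ?_, ?_⟩
  · rw [mem_interior_iff_mem_nhds]
    filter_upwards [hVmem] with x hx
    exact lt_of_le_of_lt (hbound x hx.1 hx.2).2 (EReal.coe_lt_top C)
  · intro h
    rw [h] at hfinb
    exact absurd (le_bot_iff.mp hfinb.1) (EReal.coe_ne_bot c)
  · intro h
    rw [h] at hfinb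
    exact absurd (top_le_iff.mp hfinb.2) (EReal.coe_ne_top C)
  · -- continuity
    set g : X → ℝ := fun x => (glow K e F x ybar).toReal with hg
    clear_value g
    obtain ⟨ρ, hρ, hballV⟩ := Metric.mem_nhds_iff.mp hVmem
    have hcoe : ∀ x ∈ ball xbar ρ, glow K e F x ybar = ((g x : ℝ) : EReal) := by
      intro x hx
      have hb := hbound x (hballV hx).1 (hballV hx).2
      have hnt : glow K e F x ybar ≠ ⊤ := by
        intro h; rw [h] at hb; exact absurd (top_le_iff.mp hb.2) (EReal.coe_ne_top C)
      have hnb : glow K e F x ybar ≠ ⊥ := by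
        intro h; rw [h] at hb; exact absurd (le_bot_iff.mp hb.1) (EReal.coe_ne_bot c)
      rw [hg]
      exact (EReal.coe_toReal hnt hnb).symm
    have hgb : ∀ x ∈ ball xbar ρ, c ≤ g x ∧ g x ≤ C := by
      intro x hx
      have hb := hbound x (hballV hx).1 (hballV hx).2
      rw [hcoe x hx] at hb
      exact ⟨EReal.coe_le_coe_iff.mp hb.1, EReal.coe_le_coe_iff.mp hb.2⟩
    have gconv : ∀ x₁ ∈ ball xbar ρ, ∀ x₂ ∈ ball xbar ρ, ∀ t : ℝ, 0 ≤ t → t ≤ 1 →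
        g (t • x₁ + (1-t) • x₂) ≤ t * g x₁ + (1-t) * g x₂ := by
      intro x₁ h₁ x₂ h₂ t ht0 ht1
      have hcomb : t • x₁ + (1-t) • x₂ ∈ ball xbar ρ :=
        (convex_ball xbar ρ) h₁ h₂ ht0 (by linarith) (by ring)
      have hp' : (x₁, g x₁) ∈ {p : X × ℝ | glow K e F p.1 ybar ≤ (p.2 : EReal)} := by
        simp only [mem_setOf_eq]; exact le_of_eq (hcoe x₁ h₁)
      have hq' : (x₂, g x₂) ∈ {p : X × ℝ | glow K e F p.1 ybar ≤ (p.2 : EReal)} := by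
        simp only [mem_setOf_eq]; exact le_of_eq (hcoe x₂ h₂)
      have hmem := part1 ybar hybar hp' hq' ht0 (by linarith : (0:ℝ) ≤ 1 - t) (by ring)
      simp only [mem_setOf_eq, Prod.smul_mk, Prod.mk_add_mk, smul_eq_mul] at hmem
      rw [hcoe _ hcomb] at hmem
      exact_mod_cast hmem
    set ρ' := ρ/2 with hρ'
    clear_value ρ'
    have hρ'0 : 0 < ρ' := by rw [hρ']; positivity
    have hxbar_ball : xbar ∈ ball xbar ρ := mem_ball_self hρ
    have hcC : c ≤ C := le_trans (hgb xbar hxbar_ball).1 (hgb xbar hxbar_ball).2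
    set L := (C - c)/ρ' with hL
    clear_value L
    have hL0 : 0 ≤ L := by rw [hL]; exact div_nonneg (by linarith) hρ'0.le
    have key : ∀ x, dist x xbar < ρ' → |g x - g xbar| ≤ L * dist x xbar := by
      intro x hx
      rcases eq_or_ne x xbar with rfl | hne
      · simp
      · set d := dist x xbar with hd
        have hd0 : 0 < d := dist_pos.mpr hne
        have hxball : x ∈ ball xbar ρ := by
          rw [mem_ball, ← hd]; linarith
        set t := d / ρ' with ht
        clear_value t
        have ht0 : 0 < t := by rw [ht]; exact div_pos hd0 hρ'0
        have ht1 : t < 1 := by rw [ht]; exact (div_lt_one hρ'0).mpr hx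
        set w := (ρ'/d) • (x - xbar) with hw
        have htw : t • w = x - xbar := by
          rw [hw, smul_smul, show t * (ρ'/d) = 1 by
            rw [ht, div_mul_div_comm, show d * ρ' = ρ' * d by ring,
              div_self (by positivity : ρ' * d ≠ 0)], one_smul]
        have hnormw : ‖w‖ = ρ' := by
          rw [hw, norm_smul, Real.norm_eq_abs, abs_of_pos (div_pos hρ'0 hd0),
            ← dist_eq_norm, ← hd, div_mul_cancel₀ _ (ne_of_gt hd0)]
        clear_value w
        set u := xbar + w with hu
        set v := xbar - w with hv
        clear_value u v
        have hxv : x = xbar + t • w := by rw [htw]; abel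
        have huball : u ∈ ball xbar ρ := by
          rw [mem_ball, dist_eq_norm, hu, show xbar + w - xbar = w by abel, hnormw, hρ']
          linarith
        have hvball : v ∈ ball xbar ρ := by
          rw [mem_ball, dist_eq_norm, hv, show xbar - w - xbar = -w by abel, norm_neg,
            hnormw, hρ']
          linarith
        have hx_eq : t • u + (1-t) • xbar = x := by
          rw [hu, hxv]; module
        have hub := hgb u huball
        have hvb := hgb v hvball
        have hxb := hgb xbar hxbar_ball
        have hxb2 := hgb x hxball
        have up : g x ≤ t * g u + (1-t) * g xbar := by
          have h' := gconv u huball xbar hxbar_ball t ht0.le ht1.le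
          rwa [hx_eq] at h'
        have upper : g x - g xbar ≤ t * (C - c) := by
          have e2 : t * (g u - g xbar) ≤ t * (C - c) :=
            mul_le_mul_of_nonneg_left (by linarith [hub.2, hxb.1]) ht0.le
          linarith [up, e2]
        set s := 1/(1+t) with hs
        clear_value s
        have h1t : (0:ℝ) < 1 + t := by linarith
        have hs0 : 0 < s := by rw [hs]; positivity
        have hs1 : s ≤ 1 := by
          rw [hs, div_le_one h1t]; linarith
        have hss : (1+t) * s = 1 := by
          rw [hs, mul_one_div, div_self (ne_of_gt h1t)]
        have hts : 1 - s = t * s := by linear_combination -hss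
        have hxbar_eq : s • x + (1-s) • v = xbar := by
          rw [hxv, hv, smul_add, smul_smul, show s * t = 1 - s by linear_combination -hts]
          module
        have low := gconv x hxball v hvball s hs0.le hs1
        rw [hxbar_eq] at low
        have e1 : (1+t) * g xbar ≤ g x + t * g v := by
          have h2 := mul_le_mul_of_nonneg_left low h1t.le
          calc (1+t) * g xbar ≤ (1+t) * (s * g x + (1-s) * g v) := h2
            _ = ((1+t)*s) * g x + ((1+t)*s) * (t * g v) := by rw [hts]; ring
            _ = g x + t * g v := by rw [hss]; ring
        have e2 : t * (g v - g xbar) ≤ t * (C - c) :=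
          mul_le_mul_of_nonneg_left (by linarith [hvb.2, hxb.1]) ht0.le
        have lower : g xbar - g x ≤ t * (C - c) := by linarith [e1, e2]
        have hLd : t * (C - c) = L * d := by
          rw [ht, hL]; ring
        rw [← hLd]
        exact abs_le.mpr ⟨by linarith, by linarith⟩
    have hgc : ContinuousAt g xbar := by
      rw [Metric.continuousAt_iff]
      intro ε hε
      refine ⟨min ρ' (ε / (L+1)), lt_min hρ'0 (div_pos hε (by linarith)), fun {x} hx => ?_⟩
      have hx1 : dist x xbar < ρ' := lt_of_lt_of_le hx (min_le_left _ _)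
      have hx2 : dist x xbar < ε / (L+1) := lt_of_lt_of_le hx (min_le_right _ _)
      have hest := key x hx1
      rw [Real.dist_eq]
      have h2 : L * dist x xbar ≤ L * (ε/(L+1)) :=
        mul_le_mul_of_nonneg_left hx2.le hL0
      have h3 : L * (ε/(L+1)) < ε := by
        have hq : L/(L+1) < 1 := (div_lt_one (by linarith)).mpr (by linarith)
        calc L * (ε/(L+1)) = (L/(L+1)) * ε := by ring
          _ < 1 * ε := mul_lt_mul_of_pos_right hq hε
          _ = ε := one_mul ε
      calc |g x - g xbar| ≤ L * dist x xbar := hest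
        _ ≤ L * (ε/(L+1)) := h2
        _ < ε := h3
    have hcont : ContinuousAt (fun x => ((g x : ℝ) : EReal)) xbar :=
      (continuous_coe_real_ereal.continuousAt).comp hgc
    refine hcont.congr ?_
    filter_upwards [ball_mem_nhds xbar hρ] with x hx
    exact (hcoe x hx).symm
end

section
/- If H_F(x̄) := F(x̄) − K is a convex and K-upper bounded set, then the upper inner function g_{u,x̄} is a convex, K-monotone functional that is finite and continuous on all of Y (K-monotone means y₂ − y₁ ∈ K implies g_{u,x̄}(y₁) ≤ g_{u,x̄}(y₂)). -/
open Set Topology Metric Pointwise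

section Aux

variable {Y : Type*} [NormedAddCommGroup Y] [NormedSpace ℝ Y]

/-- A convex cone is closed under addition. -/
lemma kadd {K : Set Y} (hKcv : Convex ℝ K)
    (hKcone : ∀ t : ℝ, 0 ≤ t → ∀ y ∈ K, t • y ∈ K)
    {a b : Y} (ha : a ∈ K) (hb : b ∈ K) : a + b ∈ K := by
  have h := hKcv ha hb (by norm_num : (0:ℝ) ≤ 1/2) (by norm_num : (0:ℝ) ≤ 1/2) (by norm_num)
  have h2 := hKcone 2 (by norm_num) _ h
  rwa [smul_add, smul_smul, smul_smul, show (2:ℝ) * (1/2) = 1 by norm_num, one_smul,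
    one_smul] at h2

/-- Lower estimate for elements of the Gerstewitz sublevel set. -/
lemma psi_lower {K : Set Y} {e : Y} (hKcl : IsClosed K)
    (hKcone : ∀ t : ℝ, 0 ≤ t → ∀ y ∈ K, t • y ∈ K)
    (hKpt : K ∩ (-K) = {0}) (heK : e ∈ K) (hene : e ≠ 0) :
    ∃ d > (0:ℝ), ∀ (z : Y) (t : ℝ), t • e - z ∈ K → -(‖z‖ / d) ≤ t := by
  have hnm : -e ∉ K := by
    intro h
    apply hene
    have : e ∈ K ∩ (-K) := ⟨heK, by simpa using h⟩
    rw [hKpt] at this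
    simpa using this
  have hd : 0 < infDist (-e) K := (hKcl.notMem_iff_infDist_pos ⟨e, heK⟩).mp hnm
  refine ⟨infDist (-e) K, hd, fun z t ht => ?_⟩
  rcases le_or_gt 0 t with h0 | h0
  · have : 0 ≤ ‖z‖ / infDist (-e) K := div_nonneg (norm_nonneg _) hd.le
    linarith
  · have ht0 : t ≠ 0 := ne_of_lt h0
    obtain ⟨s, hs⟩ : ∃ s : ℝ, s = -t := ⟨-t, rfl⟩
    have hspos : 0 < s := by rw [hs]; linarith
    have hw : s⁻¹ • (t • e - z) ∈ K := hKcone s⁻¹ (by positivity) _ ht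
    have hweq : s⁻¹ • (t • e - z) = -e - s⁻¹ • z := by
      rw [smul_sub, smul_smul]
      have h1 : s⁻¹ * t = -1 := by
        rw [hs]
        field_simp
      rw [h1, neg_one_smul]
    have hdist : infDist (-e) K ≤ dist (-e) (s⁻¹ • (t • e - z)) :=
      infDist_le_dist_of_mem hw
    have hdeq : dist (-e) (s⁻¹ • (t • e - z)) = s⁻¹ * ‖z‖ := by
      rw [hweq, dist_eq_norm]
      have : -e - (-e - s⁻¹ • z) = s⁻¹ • z := by abel
      rw [this, norm_smul, Real.norm_eq_abs, abs_of_pos (by positivity : (0:ℝ) < s⁻¹)]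
    rw [hdeq] at hdist
    have h3 : s ≤ ‖z‖ / infDist (-e) K := by
      rw [le_div_iff₀ hd]
      have h4 : s * infDist (-e) K ≤ s * (s⁻¹ * ‖z‖) :=
        mul_le_mul_of_nonneg_left hdist hspos.le
      have h5 : s * (s⁻¹ * ‖z‖) = ‖z‖ := by
        field_simp
      linarith
    have : t = -s := by rw [hs]; ring
    linarith

/-- Upper bound element in the Gerstewitz sublevel set. -/
lemma upper_mem {K : Set Y} {e : Y} {ε : ℝ} (hε : 0 < ε) (hball : closedBall e ε ⊆ K)
    (hKcone : ∀ t : ℝ, 0 ≤ t → ∀ y ∈ K, t • y ∈ K) (z : Y) :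
    (‖z‖ / ε) • e - z ∈ K := by
  rcases eq_or_ne z 0 with rfl | hz
  · simpa using hKcone 0 le_rfl e (hball (mem_closedBall_self hε.le))
  · have hnz : 0 < ‖z‖ := norm_pos_iff.mpr hz
    obtain ⟨t, htdef⟩ : ∃ t : ℝ, t = ‖z‖ / ε := ⟨_, rfl⟩
    rw [← htdef]
    have htpos : 0 < t := htdef ▸ div_pos hnz hε
    have hmem : e - t⁻¹ • z ∈ closedBall e ε := by
      rw [mem_closedBall, dist_eq_norm]
      have h1 : e - t⁻¹ • z - e = -(t⁻¹ • z) := by abel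
      rw [h1, norm_neg, norm_smul, Real.norm_eq_abs,
        abs_of_pos (by positivity : (0:ℝ) < t⁻¹)]
      have h2 : t⁻¹ * ‖z‖ = ε := by
        rw [htdef]
        field_simp
      rw [h2]
    have h2 := hKcone t htpos.le _ (hball hmem)
    have h3 : t • (e - t⁻¹ • z) = t • e - z := by
      rw [smul_sub, smul_smul, mul_inv_cancel₀ htpos.ne', one_smul]
    rwa [h3] at h2

/-- Main case of the theorem: `e ≠ 0`. -/
lemma stmt4_main {X Y : Type*} [NormedAddCommGroup X] [NormedSpace ℝ X]
    [NormedAddCommGroup Y] [NormedSpace ℝ Y]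
    (K : Set Y) (e : Y) (F : X → Set Y) (xbar : X)
    (hKcl : IsClosed K) (hKcv : Convex ℝ K)
    (hKcone : ∀ t : ℝ, 0 ≤ t → ∀ y ∈ K, t • y ∈ K)
    (hKpt : K ∩ (-K) = {0})
    (he : e ∈ interior K) (hene : e ≠ 0)
    (hFne : (F xbar).Nonempty)
    (hHconv : Convex ℝ (F xbar - K))
    (hHub : ∃ μ > (0:ℝ), ∀ a ∈ F xbar - K, μ • e - a ∈ K) :
    Convex ℝ {p : Y × ℝ | gupp K e F xbar p.1 ≤ (p.2 : EReal)} ∧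
    (∀ y₁ y₂ : Y, y₂ - y₁ ∈ K → gupp K e F xbar y₁ ≤ gupp K e F xbar y₂) ∧
    (∀ y : Y, gupp K e F xbar y ≠ ⊥ ∧ gupp K e F xbar y ≠ ⊤) ∧
    Continuous (gupp K e F xbar) := by
  obtain ⟨μ, hμ, hub⟩ := hHub
  obtain ⟨ε₀, hε₀, hball₀⟩ := Metric.mem_nhds_iff.mp (mem_interior_iff_mem_nhds.mp he)
  have hε : (0:ℝ) < ε₀ / 2 := by linarith
  have hball : closedBall e (ε₀ / 2) ⊆ K :=
    (closedBall_subset_ball (by linarith)).trans hball₀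
  have heK : e ∈ K := interior_subset he
  obtain ⟨d, hd, hlow⟩ := psi_lower hKcl hKcone hKpt heK hene
  obtain ⟨yb₀, hyb₀⟩ := hFne
  have hHmem : ∀ yb ∈ F xbar, ∀ k ∈ K, yb - k ∈ F xbar - K :=
    fun yb hyb k hk => Set.sub_mem_sub hyb hk
  have hHsub : ∀ a ∈ F xbar - K, ∀ k ∈ K, a - k ∈ F xbar - K := by
    intro a ha k hk
    obtain ⟨yb, hyb, k1, hk1, rfl⟩ := Set.mem_sub.mp ha
    have h1 : yb - k1 - k = yb - (k1 + k) := by abel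
    rw [h1]
    exact hHmem yb hyb _ (kadd hKcv hKcone hk1 hk)
  have hQne : ∀ y : Y, ({t : ℝ | y - t • e ∈ F xbar - K}).Nonempty := by
    intro y
    refine ⟨‖y - yb₀‖ / (ε₀ / 2), ?_⟩
    have h1 := upper_mem hε hball hKcone (y - yb₀)
    have h2 : y - (‖y - yb₀‖ / (ε₀ / 2)) • e
        = yb₀ - ((‖y - yb₀‖ / (ε₀ / 2)) • e - (y - yb₀)) := by abel
    show y - (‖y - yb₀‖ / (ε₀ / 2)) • e ∈ F xbar - K
    rw [h2]
    exact hHmem yb₀ hyb₀ _ h1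
  have hQlb : ∀ y : Y, ∀ t ∈ {t : ℝ | y - t • e ∈ F xbar - K}, -(‖y‖ / d) - μ ≤ t := by
    intro y t ht
    have h1 : μ • e - (y - t • e) ∈ K := hub _ ht
    have h2 : (μ + t) • e - y = μ • e - (y - t • e) := by
      rw [add_smul]; abel
    have h3 := hlow y (μ + t) (by rw [h2]; exact h1)
    linarith
  have hQbdd : ∀ y : Y, BddBelow {t : ℝ | y - t • e ∈ F xbar - K} :=
    fun y => ⟨-(‖y‖ / d) - μ, fun t ht => hQlb y t ht⟩
  have hSQ : ∀ (y yb : Y), yb ∈ F xbar → ∀ t : ℝ, t • e - (y - yb) ∈ K →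
      y - t • e ∈ F xbar - K := by
    intro y yb hyb t ht
    have h1 : y - t • e = yb - (t • e - (y - yb)) := by abel
    rw [h1]
    exact hHmem yb hyb _ ht
  have hSbdd : ∀ w : Y, BddBelow {t : ℝ | t • e - w ∈ K} :=
    fun w => ⟨-(‖w‖ / d), fun t ht => hlow w t ht⟩
  have hSne : ∀ w : Y, ∃ t : ℝ, t • e - w ∈ K :=
    fun w => ⟨‖w‖ / (ε₀ / 2), upper_mem hε hball hKcone w⟩
  have hpsile : ∀ (w : Y) (t : ℝ), t • e - w ∈ K → psiE K e w ≤ t :=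
    fun w t ht => csInf_le (hSbdd w) ht
  have hGle : ∀ (y yb : Y), yb ∈ F xbar →
      sInf {t : ℝ | y - t • e ∈ F xbar - K} ≤ psiE K e (y - yb) :=
    fun y yb hyb => le_csInf (hSne _) fun t ht => csInf_le (hQbdd y) (hSQ y yb hyb t ht)
  have hform : ∀ y : Y,
      gupp K e F xbar y = ((sInf {t : ℝ | y - t • e ∈ F xbar - K} : ℝ) : EReal) := by
    intro y
    refine le_antisymm ?_ ?_
    · by_contra hcon
      push_neg at hcon
      obtain ⟨r, hr1, hr2⟩ := EReal.lt_iff_exists_real_btwn.mp hcon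
      obtain ⟨t, ht, htr⟩ := exists_lt_of_csInf_lt (hQne y)
        (EReal.coe_lt_coe_iff.mp hr1)
      obtain ⟨yb, hyb, k, hk, hE⟩ := Set.mem_sub.mp ht
      have hkmem : t • e - (y - yb) ∈ K := by
        have h1 : t • e - (y - yb) = yb - (y - t • e) := by abel
        rw [h1, ← hE]
        simpa using hk
      have h1 : gupp K e F xbar y ≤ (psiE K e (y - yb) : EReal) := iInf₂_le yb hyb
      have h2 : psiE K e (y - yb) ≤ t := hpsile _ t hkmem
      have h3 : gupp K e F xbar y < gupp K e F xbar y :=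
        lt_of_le_of_lt (h1.trans (EReal.coe_le_coe_iff.mpr h2))
          (lt_trans (EReal.coe_lt_coe_iff.mpr htr) hr2)
      exact absurd h3 (lt_irrefl _)
    · exact le_iInf₂ fun yb hyb => EReal.coe_le_coe_iff.mpr (hGle y yb hyb)
  have hGconv : ∀ (y₁ y₂ : Y) (a b : ℝ), 0 ≤ a → 0 ≤ b → a + b = 1 →
      sInf {t : ℝ | (a • y₁ + b • y₂) - t • e ∈ F xbar - K} ≤
        a * sInf {t : ℝ | y₁ - t • e ∈ F xbar - K}
        + b * sInf {t : ℝ | y₂ - t • e ∈ F xbar - K} := by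
    intro y₁ y₂ a b ha hb hab
    refine le_of_forall_pos_le_add fun δ hδ => ?_
    obtain ⟨t₁, ht₁, hlt₁⟩ := exists_lt_of_csInf_lt (hQne y₁)
      (lt_add_of_pos_right _ hδ)
    obtain ⟨t₂, ht₂, hlt₂⟩ := exists_lt_of_csInf_lt (hQne y₂)
      (lt_add_of_pos_right _ hδ)
    have hmem : (a • y₁ + b • y₂) - (a * t₁ + b * t₂) • e ∈ F xbar - K := by
      have h1 : (a • y₁ + b • y₂) - (a * t₁ + b * t₂) • e
          = a • (y₁ - t₁ • e) + b • (y₂ - t₂ • e) := by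
        simp only [smul_sub, smul_smul, add_smul]
        abel
      rw [h1]
      exact hHconv ht₁ ht₂ ha hb hab
    have h1 := csInf_le (hQbdd _) hmem
    have e₁ : a * t₁ ≤ a * (sInf {t : ℝ | y₁ - t • e ∈ F xbar - K} + δ) :=
      mul_le_mul_of_nonneg_left hlt₁.le ha
    have e₂ : b * t₂ ≤ b * (sInf {t : ℝ | y₂ - t • e ∈ F xbar - K} + δ) :=
      mul_le_mul_of_nonneg_left hlt₂.le hb
    nlinarith [h1, e₁, e₂]
  refine ⟨?_, ?_, ?_, ?_⟩
  · have hset : {p : Y × ℝ | gupp K e F xbar p.1 ≤ (p.2 : EReal)}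
        = {p : Y × ℝ | sInf {t : ℝ | p.1 - t • e ∈ F xbar - K} ≤ p.2} := by
      ext p
      simp only [mem_setOf_eq, hform p.1]
      exact EReal.coe_le_coe_iff
    rw [hset]
    intro p hp q hq a b ha hb hab
    simp only [mem_setOf_eq] at hp hq ⊢
    have hfst : (a • p + b • q).1 = a • p.1 + b • q.1 := by simp
    have hsnd : (a • p + b • q).2 = a * p.2 + b * q.2 := by
      simp [smul_eq_mul]
    rw [hfst, hsnd]
    calc sInf {t : ℝ | (a • p.1 + b • q.1) - t • e ∈ F xbar - K}
        ≤ a * sInf {t : ℝ | p.1 - t • e ∈ F xbar - K}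
          + b * sInf {t : ℝ | q.1 - t • e ∈ F xbar - K} := hGconv p.1 q.1 a b ha hb hab
      _ ≤ a * p.2 + b * q.2 :=
          add_le_add (mul_le_mul_of_nonneg_left hp ha) (mul_le_mul_of_nonneg_left hq hb)
  · intro y₁ y₂ hk
    rw [hform y₁, hform y₂, EReal.coe_le_coe_iff]
    refine csInf_le_csInf (hQbdd y₁) (hQne y₂) ?_
    intro t ht
    have h1 : y₁ - t • e = (y₂ - t • e) - (y₂ - y₁) := by abel
    show y₁ - t • e ∈ F xbar - K
    rw [h1]
    exact hHsub _ ht _ hk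
  · intro y
    rw [hform y]
    exact ⟨EReal.coe_ne_bot _, EReal.coe_ne_top _⟩
  · have hlip : ∀ y₁ y₂ : Y, sInf {t : ℝ | y₁ - t • e ∈ F xbar - K}
        ≤ sInf {t : ℝ | y₂ - t • e ∈ F xbar - K} + ‖y₁ - y₂‖ / (ε₀ / 2) := by
      intro y₁ y₂
      refine le_of_forall_pos_le_add fun δ hδ => ?_
      obtain ⟨t, ht, hlt⟩ := exists_lt_of_csInf_lt (hQne y₂)
        (lt_add_of_pos_right _ hδ)
      have hmem : y₁ - (t + ‖y₁ - y₂‖ / (ε₀ / 2)) • e ∈ F xbar - K := by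
        have heq : y₁ - (t + ‖y₁ - y₂‖ / (ε₀ / 2)) • e
            = (y₂ - t • e) - ((‖y₁ - y₂‖ / (ε₀ / 2)) • e - (y₁ - y₂)) := by
          rw [add_smul]; abel
        rw [heq]
        exact hHsub _ ht _ (upper_mem hε hball hKcone (y₁ - y₂))
      have h1 := csInf_le (hQbdd y₁) hmem
      linarith
    have hG : Continuous fun y : Y => sInf {t : ℝ | y - t • e ∈ F xbar - K} := by
      rw [Metric.continuous_iff]
      intro y δ hδ
      refine ⟨δ * (ε₀ / 2) / 2, by positivity, fun y' hy' => ?_⟩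
      have h1 := hlip y' y
      have h2 := hlip y y'
      have hn : ‖y' - y‖ < δ * (ε₀ / 2) / 2 := by
        rw [← dist_eq_norm]; exact hy'
      have hd1 : ‖y' - y‖ / (ε₀ / 2) < δ := by
        rw [div_lt_iff₀ hε]
        nlinarith
      have hd2 : ‖y - y'‖ / (ε₀ / 2) < δ := by
        rw [norm_sub_rev]; exact hd1
      rw [Real.dist_eq, abs_sub_lt_iff]
      exact ⟨by linarith, by linarith⟩
    have hfun : gupp K e F xbar
        = fun y => ((sInf {t : ℝ | y - t • e ∈ F xbar - K} : ℝ) : EReal) := funext hform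
    rw [hfun]
    exact continuous_coe_real_ereal.comp hG

end Aux

/-- if H_F(x̄) = F(x̄) - K is convex and K-upper bounded, then g_{u,x̄} is a
convex, K-monotone functional that is finite and continuous on all of Y. -/
theorem stmt4
    {X Y : Type*} [NormedAddCommGroup X] [NormedSpace ℝ X] [CompleteSpace X]
    [NormedAddCommGroup Y] [NormedSpace ℝ Y] [CompleteSpace Y]
    (K : Set Y) (e : Y) (F : X → Set Y) (Ω : Set X) (xbar : X)
    (hKcl : IsClosed K) (hKcv : Convex ℝ K)
    (hKcone : ∀ t : ℝ, 0 ≤ t → ∀ y ∈ K, t • y ∈ K)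
    (hKpt : K ∩ (-K) = {0})
    (he : e ∈ interior K)
    (hΩne : Ω.Nonempty) (hΩcl : IsClosed Ω)
    (hΩdom : Ω ⊆ interior {x | (F x).Nonempty})
    (hxΩ : xbar ∈ Ω)
    (hHconv : Convex ℝ (F xbar - K))
    (hHub : ∃ μ > (0:ℝ), ∀ a ∈ F xbar - K, μ • e - a ∈ K) :
    Convex ℝ {p : Y × ℝ | gupp K e F xbar p.1 ≤ (p.2 : EReal)} ∧
    (∀ y₁ y₂ : Y, y₂ - y₁ ∈ K → gupp K e F xbar y₁ ≤ gupp K e F xbar y₂) ∧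
    (∀ y : Y, gupp K e F xbar y ≠ ⊥ ∧ gupp K e F xbar y ≠ ⊤) ∧
    Continuous (gupp K e F xbar) := by
  have hFne0 : xbar ∈ {x | (F x).Nonempty} := interior_subset (hΩdom hxΩ)
  have hFne : (F xbar).Nonempty := hFne0
  by_cases hene : e = 0
  · subst hene
    have heK : (0:Y) ∈ K := interior_subset he
    obtain ⟨ε₀, hε₀, hball₀⟩ := Metric.mem_nhds_iff.mp (mem_interior_iff_mem_nhds.mp he)
    have hKuniv : ∀ y : Y, y ∈ K := by
      intro y
      rcases eq_or_ne y 0 with rfl | hy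
      · exact heK
      · have hny : 0 < ‖y‖ := norm_pos_iff.mpr hy
        have h1 : (ε₀ / 2 / ‖y‖) • y ∈ ball (0:Y) ε₀ := by
          rw [mem_ball, dist_eq_norm, sub_zero, norm_smul, Real.norm_eq_abs,
            abs_of_pos (by positivity : (0:ℝ) < ε₀ / 2 / ‖y‖)]
          have h2 : ε₀ / 2 / ‖y‖ * ‖y‖ = ε₀ / 2 := by
            field_simp
          rw [h2]; linarith
        have h2 := hKcone (2 * ‖y‖ / ε₀) (by positivity) _ (hball₀ h1)
        rw [smul_smul, show 2 * ‖y‖ / ε₀ * (ε₀ / 2 / ‖y‖) = 1 by field_simp <;> ring,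
          one_smul] at h2
        exact h2
    have hall : ∀ y : Y, y = 0 := by
      intro y
      have h1 : y ∈ K ∩ (-K) := ⟨hKuniv y, by rw [Set.mem_neg]; exact hKuniv (-y)⟩
      rw [hKpt] at h1
      simpa using h1
    have hpsi : ∀ z : Y, psiE K 0 z = 0 := by
      intro z
      unfold psiE
      have h1 : {t : ℝ | t • (0:Y) - z ∈ K} = univ :=
        eq_univ_of_forall fun t => hKuniv _
      rw [h1]
      exact Real.sInf_of_not_bddBelow not_bddBelow_univ
    obtain ⟨yb₀, hyb₀⟩ := hFne
    have hg : ∀ y : Y, gupp K 0 F xbar y = ((0:ℝ) : EReal) := by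
      intro y
      refine le_antisymm ?_ ?_
      · exact (iInf₂_le yb₀ hyb₀).trans_eq (by rw [hpsi])
      · exact le_iInf₂ fun yb hyb => by rw [hpsi]
    refine ⟨?_, ?_, ?_, ?_⟩
    · intro p hp q hq a b ha hb hab
      simp only [mem_setOf_eq, hg] at hp hq ⊢
      have hp' : (0:ℝ) ≤ p.2 := EReal.coe_le_coe_iff.mp hp
      have hq' : (0:ℝ) ≤ q.2 := EReal.coe_le_coe_iff.mp hq
      have hsnd : (a • p + b • q).2 = a * p.2 + b * q.2 := by simp [smul_eq_mul]
      rw [hsnd]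
      exact_mod_cast EReal.coe_le_coe_iff.mpr
        (add_nonneg (mul_nonneg ha hp') (mul_nonneg hb hq'))
    · intro y₁ y₂ _
      rw [hg, hg]
    · intro y
      rw [hg]
      exact ⟨EReal.coe_ne_bot _, EReal.coe_ne_top _⟩
    · have hfun : gupp K 0 F xbar = fun _ => ((0:ℝ) : EReal) := funext hg
      rw [hfun]
      exact continuous_const
  · exact stmt4_main K e F xbar hKcl hKcv hKcone hKpt he hene hFne hHconv hHub
end

section
/- If F is ⪯ˡ_K-convex, then the scalarizing functional f_{l,x̄} is convex. If moreover F is locally l-bounded at x̄, then x̄ belongs to the interior of the effective domain of f_{l,x̄}, and f_{l,x̄} is finite and continuous at x̄. -/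
open Set Topology Metric Pointwise

section Psi
set_option linter.unusedSectionVars false

variable {Y : Type*} [NormedAddCommGroup Y] [NormedSpace ℝ Y]
  {K : Set Y} {e : Y}
  (hKcv : Convex ℝ K)
  (hKcone : ∀ t : ℝ, 0 ≤ t → ∀ y ∈ K, t • y ∈ K)
  (hKpt : K ∩ (-K) = {0})
  (he : e ∈ interior K) (he0 : e ≠ 0)

include hKcv hKcone hKpt he he0

lemma addK (a b : Y) (ha : a ∈ K) (hb : b ∈ K) : a + b ∈ K := by
  have h := hKcv ha hb (by norm_num : (0:ℝ) ≤ 1/2) (by norm_num : (0:ℝ) ≤ 1/2) (by norm_num)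
  have h2 := hKcone 2 (by norm_num) _ h
  have : (2:ℝ) • ((1/2 : ℝ) • a + (1/2 : ℝ) • b) = a + b := by
    rw [smul_add, smul_smul, smul_smul]; norm_num
  rwa [this] at h2

lemma Snonempty (y : Y) : {t : ℝ | t • e - y ∈ K}.Nonempty := by
  have hK : K ∈ 𝓝 e := mem_interior_iff_mem_nhds.mp he
  obtain ⟨r, hr, hball⟩ := Metric.mem_nhds_iff.mp hK
  set t : ℝ := (‖y‖ + r) / r with ht
  have htpos : 0 < t := by positivity
  refine ⟨t, ?_⟩
  have hmem : e - t⁻¹ • y ∈ K := by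
    apply hball
    simp only [Metric.mem_ball, dist_eq_norm]
    have : e - t⁻¹ • y - e = -(t⁻¹ • y) := by abel
    rw [this, norm_neg, norm_smul, Real.norm_eq_abs, abs_inv, abs_of_pos htpos]
    rw [inv_mul_lt_iff₀ htpos, ht]
    rw [div_mul_eq_mul_div, lt_div_iff₀ hr]
    nlinarith [norm_nonneg y]
  have := hKcone t htpos.le _ hmem
  have heq : t • (e - t⁻¹ • y) = t • e - y := by
    rw [smul_sub, smul_smul, mul_inv_cancel₀ htpos.ne', one_smul]
  rwa [heq] at this

lemma Slower {a : Y} {c : ℝ} (h : a + c • e ∈ K) : ∀ t ∈ {t : ℝ | t • e - a ∈ K}, -c ≤ t := by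
  intro t ht
  by_contra hlt
  push_neg at hlt
  have hsum : (t + c) • e ∈ K := by
    have := addK hKcv hKcone hKpt he he0 _ _ ht h
    have heq : t • e - a + (a + c • e) = (t + c) • e := by
      rw [add_smul]; abel
    rwa [heq] at this
  have hneg : -((t + c) • e) ∈ K := by
    have : (-(t+c)) • e ∈ K := hKcone _ (by linarith) _ (interior_subset he)
    rwa [neg_smul] at this
  have : (t + c) • e ∈ K ∩ (-K) := ⟨hsum, by simpa [Set.mem_neg] using hneg⟩
  rw [hKpt] at this
  have := smul_eq_zero.mp this
  rcases this with h' | h'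
  · linarith
  · exact he0 h'

lemma SbddBelow (y : Y) : BddBelow {t : ℝ | t • e - y ∈ K} := by
  obtain ⟨t', ht'⟩ := Snonempty hKcv hKcone hKpt he he0 (-y)
  have h : y + t' • e ∈ K := by
    have : t' • e - -y ∈ K := ht'
    rwa [sub_neg_eq_add, add_comm] at this
  exact ⟨-t', fun t ht => Slower hKcv hKcone hKpt he he0 h t ht⟩

lemma psiE_le {a : Y} {c : ℝ} (h : c • e - a ∈ K) : psiE K e a ≤ c :=
  csInf_le (SbddBelow hKcv hKcone hKpt he he0 a) h

lemma le_psiE {a : Y} {c : ℝ} (h : a + c • e ∈ K) : -c ≤ psiE K e a :=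
  le_csInf (Snonempty hKcv hKcone hKpt he he0 a) (Slower hKcv hKcone hKpt he he0 h)

lemma psiE_mono {a k : Y} (hk : k ∈ K) : psiE K e a ≤ psiE K e (a + k) := by
  apply csInf_le_csInf (SbddBelow hKcv hKcone hKpt he he0 a)
    (Snonempty hKcv hKcone hKpt he he0 _)
  intro t ht
  have : t • e - (a + k) + k ∈ K := addK hKcv hKcone hKpt he he0 _ _ ht hk
  have heq : t • e - (a + k) + k = t • e - a := by abel
  rwa [heq] at this

lemma psiE_combo {a b : Y} {t : ℝ} (ht : t ∈ Set.Ioo (0:ℝ) 1) :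
    psiE K e (t • a + (1 - t) • b) ≤ t * psiE K e a + (1 - t) * psiE K e b := by
  obtain ⟨ht0, ht1⟩ := ht
  have h1t : 0 < 1 - t := by linarith
  have key : ∀ u ∈ {s : ℝ | s • e - a ∈ K}, ∀ v ∈ {s : ℝ | s • e - b ∈ K},
      psiE K e (t • a + (1 - t) • b) ≤ t * u + (1 - t) * v := by
    intro u hu v hv
    apply psiE_le hKcv hKcone hKpt he he0
    have h1 : t • (u • e - a) ∈ K := hKcone t ht0.le _ hu
    have h2 : (1 - t) • (v • e - b) ∈ K := hKcone _ h1t.le _ hv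
    have := addK hKcv hKcone hKpt he he0 _ _ h1 h2
    have heq : t • (u • e - a) + (1 - t) • (v • e - b)
        = (t * u + (1 - t) * v) • e - (t • a + (1 - t) • b) := by
      rw [smul_sub, smul_sub, add_smul, smul_smul, smul_smul]; abel
    rwa [heq] at this
  have step1 : ∀ u ∈ {s : ℝ | s • e - a ∈ K},
      psiE K e (t • a + (1 - t) • b) ≤ t * u + (1 - t) * psiE K e b := by
    intro u hu
    have : (psiE K e (t • a + (1 - t) • b) - t * u) / (1 - t) ≤ psiE K e b := by
      apply le_csInf (Snonempty hKcv hKcone hKpt he he0 b)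
      intro v hv
      rw [div_le_iff₀ h1t]
      have := key u hu v hv
      nlinarith
    rw [div_le_iff₀ h1t] at this
    nlinarith
  have : (psiE K e (t • a + (1 - t) • b) - (1 - t) * psiE K e b) / t ≤ psiE K e a := by
    apply le_csInf (Snonempty hKcv hKcone hKpt he he0 a)
    intro u hu
    rw [div_le_iff₀ ht0]
    have := step1 u hu
    nlinarith
  rw [div_le_iff₀ ht0] at this
  nlinarith

end Psi

section FlowSec
set_option linter.unusedSectionVars false

variable {X Y : Type*} [NormedAddCommGroup X] [NormedSpace ℝ X]
    [NormedAddCommGroup Y] [NormedSpace ℝ Y]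
  {K : Set Y} {e : Y}
  (hKcv : Convex ℝ K)
  (hKcone : ∀ t : ℝ, 0 ≤ t → ∀ y ∈ K, t • y ∈ K)
  (hKpt : K ∩ (-K) = {0})
  (he : e ∈ interior K) (he0 : e ≠ 0)
  (F : X → Set Y) (xbar : X)

include hKcv hKcone hKpt he he0

lemma glow_top {x : X} (hx : F x = ∅) (z : Y) : glow K e F x z = ⊤ := by
  simp [glow, hx]

lemma flow_nonempty {x : X} {c : EReal} (hFxb : (F xbar).Nonempty) (hc : c ≠ ⊤)
    (h : flow K e F xbar x ≤ c) : (F x).Nonempty := by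
  by_contra hx
  rw [Set.not_nonempty_iff_eq_empty] at hx
  obtain ⟨yb0, hyb0⟩ := hFxb
  have h1 : glow K e F x yb0 ≤ flow K e F xbar x :=
    le_iSup₂ (f := fun yb _ => glow K e F x yb) yb0 hyb0
  rw [glow_top hKcv hKcone hKpt he he0 F hx] at h1
  exact hc (top_le_iff.mp (le_trans h1 h))

theorem flow_core (hFxb : (F xbar).Nonempty)
    (hconv : ∀ x₁ x₂ : X, (F x₁).Nonempty → (F x₂).Nonempty → ∀ t : ℝ, t ∈ Set.Ioo (0:ℝ) 1 →
      t • F x₁ + (1 - t) • F x₂ ⊆ F (t • x₁ + (1 - t) • x₂) + K)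
    {x₁ x₂ : X} {t : ℝ} (ht : t ∈ Set.Ioo (0:ℝ) 1) {r s : ℝ}
    (h1 : flow K e F xbar x₁ ≤ (r : EReal)) (h2 : flow K e F xbar x₂ ≤ (s : EReal)) :
    flow K e F xbar (t • x₁ + (1 - t) • x₂) ≤ ((t * r + (1 - t) * s : ℝ) : EReal) := by
  have hF1 : (F x₁).Nonempty := flow_nonempty hKcv hKcone hKpt he he0 F xbar hFxb
    (EReal.coe_ne_top r) h1
  have hF2 : (F x₂).Nonempty := flow_nonempty hKcv hKcone hKpt he he0 F xbar hFxb
    (EReal.coe_ne_top s) h2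
  refine le_of_forall_gt_imp_ge_of_dense fun c hc => ?_
  induction c with
  | bot => exact absurd hc (by simp)
  | top => exact le_top
  | coe c' =>
    have hc' : t * r + (1 - t) * s < c' := by exact_mod_cast hc
    set ε : ℝ := c' - (t * r + (1 - t) * s) with hε
    have hεpos : 0 < ε := by simp [hε]; linarith
    rw [flow]
    apply iSup₂_le
    intro yb hyb
    have g1 : glow K e F x₁ yb < ((r + ε : ℝ) : EReal) := by
      refine lt_of_le_of_lt (le_trans (le_iSup₂ (f := fun yb _ => glow K e F x₁ yb) yb hyb) h1) ?_
      exact_mod_cast (by linarith : r < r + ε)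
    have g2 : glow K e F x₂ yb < ((s + ε : ℝ) : EReal) := by
      refine lt_of_le_of_lt (le_trans (le_iSup₂ (f := fun yb _ => glow K e F x₂ yb) yb hyb) h2) ?_
      exact_mod_cast (by linarith : s < s + ε)
    obtain ⟨y₁, hy₁, hψ₁⟩ : ∃ y ∈ F x₁, psiE K e (y - yb) < r + ε := by
      simpa [glow, iInf_lt_iff, ← EReal.coe_add, EReal.coe_lt_coe_iff] using g1
    obtain ⟨y₂, hy₂, hψ₂⟩ : ∃ y ∈ F x₂, psiE K e (y - yb) < s + ε := by
      simpa [glow, iInf_lt_iff, ← EReal.coe_add, EReal.coe_lt_coe_iff] using g2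
    obtain ⟨y, hy, k, hk, hsum⟩ := Set.mem_add.mp (hconv x₁ x₂ hF1 hF2 t ht
      (Set.add_mem_add (Set.smul_mem_smul_set hy₁) (Set.smul_mem_smul_set hy₂)))
    have e2 : y - yb + k = t • (y₁ - yb) + (1 - t) • (y₂ - yb) := by
      have hyb' : t • yb + (1 - t) • yb = yb := by
        rw [← add_smul]; norm_num
      rw [smul_sub, smul_sub]
      have : t • y₁ + (1 - t) • y₂ = y + k := hsum.symm
      rw [show t • y₁ - t • yb + ((1 - t) • y₂ - (1 - t) • yb)
          = (t • y₁ + (1 - t) • y₂) - (t • yb + (1 - t) • yb) by abel, this, hyb']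
      abel
    have e1 : psiE K e (y - yb) ≤ psiE K e (t • (y₁ - yb) + (1 - t) • (y₂ - yb)) := by
      rw [← e2]; exact psiE_mono hKcv hKcone hKpt he he0 hk
    have e3 := psiE_combo hKcv hKcone hKpt he he0 (a := y₁ - yb) (b := y₂ - yb) ht
    have hfin : psiE K e (y - yb) < c' := by
      obtain ⟨ht0, ht1⟩ := ht
      nlinarith
    calc glow K e F (t • x₁ + (1 - t) • x₂) yb ≤ (psiE K e (y - yb) : EReal) := iInf₂_le y hy
      _ ≤ (c' : EReal) := by exact_mod_cast le_of_lt hfin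

lemma zeroK : (0:Y) ∈ K := by
  have : (0:Y) ∈ K ∩ (-K) := by rw [hKpt]; exact Set.mem_singleton 0
  exact this.1

lemma box_decomp {μ : ℝ} {x : X}
    (hx : (F x ∩ {y : Y | y + μ • e ∈ K ∧ μ • e - y ∈ K}) + K = F x + K)
    {y0 : Y} (hy0 : y0 ∈ F x) :
    ∃ y' ∈ F x, (y' + μ • e ∈ K ∧ μ • e - y' ∈ K) ∧ ∃ k ∈ K, y' + k = y0 := by
  have : y0 ∈ F x + K := by
    rw [show y0 = y0 + 0 by abel]
    exact Set.add_mem_add hy0 (zeroK hKcv hKcone hKpt he he0)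
  rw [← hx] at this
  obtain ⟨y', hy', k, hk, hsum⟩ := Set.mem_add.mp this
  exact ⟨y', hy'.1, hy'.2, k, hk, hsum⟩

lemma two_mu_smul (μ : ℝ) : (2 * μ) • e = μ • e + μ • e := by
  rw [two_mul, add_smul]

lemma flow_upper {μ : ℝ}
    (hbx : (F xbar ∩ {y : Y | y + μ • e ∈ K ∧ μ • e - y ∈ K}) + K = F xbar + K)
    {x : X} (hx : (F x ∩ {y : Y | y + μ • e ∈ K ∧ μ • e - y ∈ K}) + K = F x + K)
    (hFx : (F x).Nonempty) :
    flow K e F xbar x ≤ ((2 * μ : ℝ) : EReal) := by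
  obtain ⟨y0, hy0⟩ := hFx
  obtain ⟨y', hy'F, hy'box, -⟩ := box_decomp hKcv hKcone hKpt he he0 F hx hy0
  apply iSup₂_le
  intro yb hyb
  obtain ⟨yb', -, hyb'box, k, hk, hsum⟩ := box_decomp hKcv hKcone hKpt he he0 F hbx hyb
  have hchain : glow K e F x yb ≤ (psiE K e (y' - yb) : EReal) := iInf₂_le y' hy'F
  refine le_trans hchain ?_
  have : psiE K e (y' - yb) ≤ 2 * μ := by
    apply psiE_le hKcv hKcone hKpt he he0
    have hmem : (μ • e - y') + ((yb' + μ • e) + k) ∈ K :=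
      addK hKcv hKcone hKpt he he0 _ _ hy'box.2
        (addK hKcv hKcone hKpt he he0 _ _ hyb'box.1 hk)
    have heq : (μ • e - y') + ((yb' + μ • e) + k) = (2 * μ) • e - (y' - yb) := by
      rw [two_mu_smul hKcv hKcone hKpt he he0 μ, ← hsum]; abel
    rwa [heq] at hmem
  exact_mod_cast this

lemma flow_lower {μ : ℝ}
    (hbx : (F xbar ∩ {y : Y | y + μ • e ∈ K ∧ μ • e - y ∈ K}) + K = F xbar + K)
    (hFxb : (F xbar).Nonempty) :
    ((-(2 * μ) : ℝ) : EReal) ≤ flow K e F xbar xbar := by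
  obtain ⟨y0, hy0⟩ := hFxb
  obtain ⟨yb', hyb'F, hyb'box, -⟩ := box_decomp hKcv hKcone hKpt he he0 F hbx hy0
  refine le_trans ?_ (le_iSup₂ (f := fun yb _ => glow K e F xbar yb) yb' hyb'F)
  apply le_iInf₂
  intro y hy
  obtain ⟨y'', -, hy''box, k, hk, hsum⟩ := box_decomp hKcv hKcone hKpt he he0 F hbx hy
  have h1 : psiE K e (y'' - yb') ≤ psiE K e (y - yb') := by
    have := psiE_mono hKcv hKcone hKpt he he0 (a := y'' - yb') hk
    rwa [show y'' - yb' + k = y - yb' by rw [← hsum]; abel] at this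
  have h2 : -(2 * μ) ≤ psiE K e (y'' - yb') := by
    apply le_psiE hKcv hKcone hKpt he he0
    have hmem : (y'' + μ • e) + (μ • e - yb') ∈ K :=
      addK hKcv hKcone hKpt he he0 _ _ hy''box.1 hyb'box.2
    have heq : (y'' + μ • e) + (μ • e - yb') = (y'' - yb') + (2 * μ) • e := by
      rw [two_mu_smul hKcv hKcone hKpt he he0 μ]; abel
    rwa [heq] at hmem
  have : -(2 * μ) ≤ psiE K e (y - yb') := le_trans h2 h1
  exact_mod_cast this

end FlowSec

/-- if F is ⪯ˡ_K-convex then f_{l,x̄} is convex (epigraph convexity); if moreover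
F is locally l-bounded at x̄, then x̄ lies in the interior of the effective domain of f_{l,x̄}
and f_{l,x̄} is finite and continuous at x̄. -/


theorem stmt5
    {X Y : Type*} [NormedAddCommGroup X] [NormedSpace ℝ X] [CompleteSpace X]
    [NormedAddCommGroup Y] [NormedSpace ℝ Y] [CompleteSpace Y]
    (K : Set Y) (e : Y) (F : X → Set Y) (Ω : Set X) (xbar : X)
    (hKcl : IsClosed K) (hKcv : Convex ℝ K)
    (hKcone : ∀ t : ℝ, 0 ≤ t → ∀ y ∈ K, t • y ∈ K)
    (hKpt : K ∩ (-K) = {0})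
    (he : e ∈ interior K)
    (hΩne : Ω.Nonempty) (hΩcl : IsClosed Ω)
    (hΩdom : Ω ⊆ interior {x | (F x).Nonempty})
    (hxΩ : xbar ∈ Ω)
    (hconv : ∀ x₁ x₂ : X, (F x₁).Nonempty → (F x₂).Nonempty → ∀ t : ℝ, t ∈ Set.Ioo (0:ℝ) 1 →
      t • F x₁ + (1 - t) • F x₂ ⊆ F (t • x₁ + (1 - t) • x₂) + K) :
    Convex ℝ {p : X × ℝ | flow K e F xbar p.1 ≤ (p.2 : EReal)} ∧
    ((∃ μ > (0:ℝ), ∃ U ∈ 𝓝 xbar, ∀ x ∈ U,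
        (F x ∩ {y : Y | y + μ • e ∈ K ∧ μ • e - y ∈ K}) + K = F x + K) →
      xbar ∈ interior {x : X | flow K e F xbar x < ⊤} ∧
      flow K e F xbar xbar ≠ ⊥ ∧ flow K e F xbar xbar ≠ ⊤ ∧
      ContinuousAt (flow K e F xbar) xbar) := by
  have hFxb : (F xbar).Nonempty := interior_subset (s := {x : X | (F x).Nonempty}) (hΩdom hxΩ)
  rcases subsingleton_or_nontrivial Y with hY | hY
  · -- degenerate case: Y is a subsingleton
    have hK0 : (0:Y) ∈ K := by
      have : (0:Y) ∈ K ∩ (-K) := by rw [hKpt]; exact Set.mem_singleton 0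
      exact this.1
    have hpsi : ∀ y : Y, psiE K e y = 0 := by
      intro y
      have hset : {t : ℝ | t • e - y ∈ K} = Set.univ := by
        ext t
        simp only [Set.mem_setOf_eq, Set.mem_univ, iff_true]
        rw [Subsingleton.elim (t • e - y) 0]
        exact hK0
      rw [psiE, hset]
      exact Real.sInf_of_not_bddBelow (by simpa using not_bddBelow_univ (α := ℝ))
    have hglow : ∀ x z, (F x).Nonempty → glow K e F x z = 0 := by
      rintro x z ⟨y0, hy0⟩
      apply le_antisymm
      · have := iInf₂_le (f := fun (y : Y) (_ : y ∈ F x) => (psiE K e (y - z) : EReal)) y0 hy0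
        rw [glow]
        simpa [hpsi] using this
      · apply le_iInf₂
        intro y hy
        simp [hpsi]
    have hflow : ∀ x, (F x).Nonempty → flow K e F xbar x = 0 := by
      intro x hx
      apply le_antisymm
      · apply iSup₂_le
        intro yb hyb
        rw [hglow x yb hx]
      · obtain ⟨yb0, hyb0⟩ := hFxb
        have := le_iSup₂ (f := fun (yb : Y) (_ : yb ∈ F xbar) => glow K e F x yb) yb0 hyb0
        rw [hglow x yb0 hx] at this
        exact this
    have hflow_ne : ∀ x (c : ℝ), flow K e F xbar x ≤ (c : EReal) → (F x).Nonempty := by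
      intro x c h
      by_contra hx
      rw [Set.not_nonempty_iff_eq_empty] at hx
      obtain ⟨yb0, hyb0⟩ := hFxb
      have h1 : glow K e F x yb0 ≤ flow K e F xbar x :=
        le_iSup₂ (f := fun yb _ => glow K e F x yb) yb0 hyb0
      have h2 : glow K e F x yb0 = ⊤ := by simp [glow, hx]
      rw [h2, top_le_iff] at h1
      rw [h1] at h
      exact (EReal.coe_lt_top c).not_ge h
    constructor
    · intro p hp q hq a b ha hb hab
      simp only [Set.mem_setOf_eq] at hp hq ⊢
      have hFp : (F p.1).Nonempty := hflow_ne p.1 p.2 hp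
      have hFq : (F q.1).Nonempty := hflow_ne q.1 q.2 hq
      have hp2 : 0 ≤ p.2 := by
        rw [hflow p.1 hFp] at hp; exact_mod_cast hp
      have hq2 : 0 ≤ q.2 := by
        rw [hflow q.1 hFq] at hq; exact_mod_cast hq
      have hval : (a • p + b • q).2 = a * p.2 + b * q.2 := rfl
      have hfst : (a • p + b • q).1 = a • p.1 + b • q.1 := rfl
      rcases eq_or_lt_of_le ha with ha0 | ha0
      · have hb1 : b = 1 := by linarith
        have : a • p + b • q = q := by rw [← ha0, hb1]; simp
        rw [this]; exact hq
      rcases eq_or_lt_of_le hb with hb0 | hb0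
      · have ha1 : a = 1 := by linarith
        have : a • p + b • q = p := by rw [← hb0, ha1]; simp
        rw [this]; exact hp
      have hFmid : (F (a • p.1 + b • q.1)).Nonempty := by
        obtain ⟨y₁, hy₁⟩ := id hFp
        obtain ⟨y₂, hy₂⟩ := id hFq
        have hb' : b = 1 - a := by linarith
        have hsub := hconv p.1 q.1 hFp hFq a ⟨ha0, by linarith⟩
        have hmem : a • y₁ + (1 - a) • y₂ ∈ a • F p.1 + (1 - a) • F q.1 :=
          Set.add_mem_add (Set.smul_mem_smul_set hy₁) (Set.smul_mem_smul_set hy₂)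
        obtain ⟨y, hy, -⟩ := Set.mem_add.mp (hsub hmem)
        exact ⟨y, by rwa [hb']⟩
      rw [hfst, hval, hflow _ hFmid]
      have : (0:ℝ) ≤ a * p.2 + b * q.2 := by positivity
      exact_mod_cast this
    · intro _
      have hsub : {x : X | (F x).Nonempty} ⊆ {x : X | flow K e F xbar x < ⊤} := by
        intro x hx
        simp only [Set.mem_setOf_eq]
        rw [hflow x hx]
        exact EReal.zero_lt_top
      refine ⟨interior_mono hsub (hΩdom hxΩ), ?_, ?_, ?_⟩
      · rw [hflow xbar hFxb]; simp
      · rw [hflow xbar hFxb]; simp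
      · have heq : flow K e F xbar =ᶠ[𝓝 xbar] fun _ => (0 : EReal) := by
          filter_upwards [isOpen_interior.mem_nhds (hΩdom hxΩ)] with x hx
          exact hflow x (interior_subset (s := {x : X | (F x).Nonempty}) hx)
        exact (continuousAt_congr heq).mpr continuousAt_const
  · -- main case: Y nontrivial
    have he0 : e ≠ 0 := by
      intro h0
      rw [h0] at he
      obtain ⟨y, hy⟩ := exists_ne (0:Y)
      have hK : K ∈ 𝓝 (0:Y) := mem_interior_iff_mem_nhds.mp he
      obtain ⟨r, hr, hball⟩ := Metric.mem_nhds_iff.mp hK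
      have hmem : ∀ z : Y, z ∈ K := by
        intro z
        rcases eq_or_ne z 0 with rfl | hz
        · exact interior_subset he
        · have hz' : 0 < ‖z‖ := norm_pos_iff.mpr hz
          set c : ℝ := r / (2 * ‖z‖) with hc
          have hcpos : 0 < c := by positivity
          have h1 : c • z ∈ K := by
            apply hball
            simp only [Metric.mem_ball, dist_eq_norm, sub_zero, norm_smul, Real.norm_eq_abs,
              abs_of_pos hcpos]
            rw [hc, div_mul_eq_mul_div, mul_comm]
            rw [div_lt_iff₀ (by positivity)]
            nlinarith
          have := hKcone c⁻¹ (inv_nonneg.mpr hcpos.le) _ h1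
          rwa [smul_smul, inv_mul_cancel₀ hcpos.ne', one_smul] at this
      have : y ∈ K ∩ (-K) := ⟨hmem y, by simpa [Set.mem_neg] using hmem (-y)⟩
      rw [hKpt] at this
      exact hy this
    constructor
    · -- convexity of the epigraph
      intro p hp q hq a b ha hb hab
      simp only [Set.mem_setOf_eq] at hp hq ⊢
      rcases eq_or_lt_of_le ha with ha0 | ha0
      · have hb1 : b = 1 := by linarith
        have : a • p + b • q = q := by rw [← ha0, hb1]; simp
        rw [this]; exact hq
      rcases eq_or_lt_of_le hb with hb0 | hb0
      · have ha1 : a = 1 := by linarith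
        have : a • p + b • q = p := by rw [← hb0, ha1]; simp
        rw [this]; exact hp
      have hb' : b = 1 - a := by linarith
      have hfst : (a • p + b • q).1 = a • p.1 + (1 - a) • q.1 := by
        rw [hb']; rfl
      have hval : (a • p + b • q).2 = a * p.2 + (1 - a) * q.2 := by
        rw [hb']; rfl
      rw [hfst, hval]
      exact flow_core hKcv hKcone hKpt he he0 F xbar hFxb hconv ⟨ha0, by linarith⟩ hp hq
    · rintro ⟨μ, hμ, U, hU, hbound⟩
      have hxU : xbar ∈ U := mem_of_mem_nhds hU
      have hbx := hbound xbar hxU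
      have hV : U ∩ interior {x | (F x).Nonempty} ∈ 𝓝 xbar :=
        Filter.inter_mem hU (isOpen_interior.mem_nhds (hΩdom hxΩ))
      obtain ⟨ρ, hρpos, hρ⟩ := Metric.mem_nhds_iff.mp hV
      set M : ℝ := 2 * μ with hM
      have hub : ∀ x ∈ ball xbar ρ, flow K e F xbar x ≤ (M : EReal) := by
        intro x hx
        exact flow_upper hKcv hKcone hKpt he he0 F xbar hbx (hbound x (hρ hx).1)
          (interior_subset (s := {x : X | (F x).Nonempty}) (hρ hx).2)
      have hlb : ((-M : ℝ) : EReal) ≤ flow K e F xbar xbar := by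
        have := flow_lower hKcv hKcone hKpt he he0 F xbar hbx hFxb
        simpa [hM] using this
      have hxball : xbar ∈ ball xbar ρ := mem_ball_self hρpos
      have hfub : flow K e F xbar xbar ≤ (M : EReal) := hub xbar hxball
      have hne_top : flow K e F xbar xbar ≠ ⊤ :=
        ne_top_of_le_ne_top (EReal.coe_ne_top M) hfub
      have hne_bot : flow K e F xbar xbar ≠ ⊥ := by
        intro h
        rw [h] at hlb
        exact (EReal.bot_lt_coe (-M)).not_ge hlb
      set m₀ : ℝ := (flow K e F xbar xbar).toReal with hm₀def
      have hm₀ : (m₀ : EReal) = flow K e F xbar xbar := EReal.coe_toReal hne_top hne_bot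
      have hm₀le : m₀ ≤ M := by
        rw [← hm₀] at hfub; exact_mod_cast hfub
      -- lower bound on the ball via convexity (reflection argument)
      have lball : ∀ x ∈ ball xbar ρ, ((2 * m₀ - M : ℝ) : EReal) ≤ flow K e F xbar x := by
        intro x hx
        by_contra h'
        push_neg at h'
        obtain ⟨c, hc1, hc2⟩ := exists_between h'
        induction c with
        | bot => exact (not_lt_bot hc1).elim
        | top => exact ((EReal.coe_lt_top _).not_gt hc2).elim
        | coe c' =>
          have hc2' : c' < 2 * m₀ - M := by exact_mod_cast hc2
          have hle : flow K e F xbar x ≤ (c' : EReal) := hc1.le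
          set x' : X := (2:ℝ) • xbar - x with hx'
          have hx'ball : x' ∈ ball xbar ρ := by
            simp only [mem_ball, dist_eq_norm] at hx ⊢
            have : x' - xbar = xbar - x := by rw [hx', two_smul]; abel
            rw [this, norm_sub_rev]
            exact hx
          have hub' : flow K e F xbar x' ≤ (M : EReal) := hub x' hx'ball
          have hmid : (1/2 : ℝ) • x + (1 - (1/2 : ℝ)) • x' = xbar := by
            rw [hx']
            have : (1 - (1/2:ℝ)) = (1/2:ℝ) := by norm_num
            rw [this, smul_sub, smul_smul]
            norm_num
          have := flow_core hKcv hKcone hKpt he he0 F xbar hFxb hconv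
            (by norm_num : (1/2 : ℝ) ∈ Set.Ioo (0:ℝ) 1) hle hub'
          rw [hmid, ← hm₀] at this
          have : m₀ ≤ 1/2 * c' + (1 - 1/2) * M := by exact_mod_cast this
          linarith
      set g : X → ℝ := fun x => (flow K e F xbar x).toReal with hg
      have hfin : ∀ x ∈ ball xbar ρ, (g x : EReal) = flow K e F xbar x := by
        intro x hx
        apply EReal.coe_toReal
        · exact ne_top_of_le_ne_top (EReal.coe_ne_top M) (hub x hx)
        · intro h
          have := lball x hx
          rw [h] at this
          exact (EReal.bot_lt_coe _).not_ge this
      have hgxbar : g xbar = m₀ := rfl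
      set C : ℝ := 2 * (M - m₀) / ρ with hC
      have hCnn : 0 ≤ C := div_nonneg (by linarith) hρpos.le
      have hlip : ∀ x, dist x xbar < ρ/2 → |g x - m₀| ≤ C * dist x xbar := by
        intro x hx
        rcases eq_or_ne x xbar with rfl | hne
        · simp [hgxbar, dist_self]
        · set h : X := x - xbar with hh
          have hh0 : h ≠ 0 := sub_ne_zero.mpr hne
          have hhn : ‖h‖ = dist x xbar := by rw [hh, dist_eq_norm]
          have hhpos : 0 < ‖h‖ := norm_pos_iff.mpr hh0
          set t : ℝ := 2 * ‖h‖ / ρ with htdef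
          have ht0 : 0 < t := by positivity
          have ht1 : t < 1 := by
            rw [htdef, div_lt_one hρpos, hhn]; linarith
          have htinv : t⁻¹ * ‖h‖ = ρ / 2 := by
            rw [htdef]; field_simp
          have hxp : xbar + t⁻¹ • h ∈ ball xbar ρ := by
            simp only [mem_ball, dist_eq_norm, add_sub_cancel_left]
            rw [norm_smul, Real.norm_eq_abs, abs_of_pos (inv_pos.mpr ht0), htinv]
            linarith
          have hxm : xbar - t⁻¹ • h ∈ ball xbar ρ := by
            simp only [mem_ball, dist_eq_norm]
            rw [show xbar - t⁻¹ • h - xbar = -(t⁻¹ • h) by abel, norm_neg]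
            rw [norm_smul, Real.norm_eq_abs, abs_of_pos (inv_pos.mpr ht0), htinv]
            linarith
          have hxball' : x ∈ ball xbar ρ := by
            rw [mem_ball]; linarith [hx]
          have hflowx : flow K e F xbar x ≤ ((g x : ℝ) : EReal) := (hfin x hxball').ge
          have hup : g x - m₀ ≤ t * (M - m₀) := by
            have hsm : t • (t⁻¹ • h) = h := by
              rw [smul_smul, mul_inv_cancel₀ ht0.ne', one_smul]
            have hmid : t • (xbar + t⁻¹ • h) + (1 - t) • xbar = x := by
              rw [smul_add, hsm, sub_smul, one_smul, hh]; abel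
            have h1 := flow_core hKcv hKcone hKpt he he0 F xbar hFxb hconv
              ⟨ht0, ht1⟩ (hub _ hxp) hm₀.ge
            rw [hmid] at h1
            have h1' : g x ≤ t * M + (1 - t) * m₀ := by
              rw [← hfin x hxball'] at h1
              exact_mod_cast h1
            nlinarith
          have hlo : -(t * (M - m₀)) ≤ g x - m₀ := by
            have h1t : (0:ℝ) < 1 + t := by linarith
            set u : ℝ := 1 / (1 + t) with hudef
            have hu0 : 0 < u := by positivity
            have hu1 : u < 1 := by rw [hudef, div_lt_one h1t]; linarith
            have hfact : (1 - u) * t⁻¹ = u := by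
              rw [hudef]; field_simp; try ring
            have hmid : u • x + (1 - u) • (xbar - t⁻¹ • h) = xbar := by
              rw [hh, smul_sub, smul_smul, hfact, smul_sub, sub_smul, one_smul]
              abel
            have h2 := flow_core hKcv hKcone hKpt he he0 F xbar hFxb hconv
              ⟨hu0, hu1⟩ hflowx (hub _ hxm)
            rw [hmid, ← hm₀] at h2
            have hcast : m₀ ≤ u * g x + (1 - u) * M := by exact_mod_cast h2
            have hmul := mul_le_mul_of_nonneg_right hcast h1t.le
            have hrhs : (u * g x + (1 - u) * M) * (1 + t) = g x + t * M := by
              rw [hudef]; field_simp; try ring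
            rw [hrhs] at hmul
            nlinarith
          have hCd : C * dist x xbar = t * (M - m₀) := by
            rw [hC, htdef, ← hhn]; field_simp; try ring
          rw [hCd]
          exact abs_le.mpr ⟨by linarith, hup⟩
      refine ⟨?_, hne_bot, hne_top, ?_⟩
      · exact mem_interior.mpr ⟨ball xbar ρ,
          fun x hx => lt_of_le_of_lt (hub x hx) (EReal.coe_lt_top M), isOpen_ball, hxball⟩
      · have hgt : Filter.Tendsto g (𝓝 xbar) (𝓝 m₀) := by
          rw [Metric.tendsto_nhds]
          intro ε hε
          have hδpos : 0 < min (ρ/2) (ε/(C+1)) := lt_min (by linarith) (by positivity)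
          filter_upwards [Metric.ball_mem_nhds xbar hδpos] with x hx
          have h1 : dist x xbar < ρ/2 := lt_of_lt_of_le hx (min_le_left _ _)
          have h2 : dist x xbar < ε/(C+1) := lt_of_lt_of_le hx (min_le_right _ _)
          have h3 := hlip x h1
          have h4 : dist x xbar * (C+1) < ε := (lt_div_iff₀ (by positivity)).mp h2
          rw [Real.dist_eq]
          nlinarith [dist_nonneg (x := x) (y := xbar)]
        have htend : Filter.Tendsto (flow K e F xbar) (𝓝 xbar) (𝓝 (flow K e F xbar xbar)) := by
          rw [← hm₀]
          refine Filter.Tendsto.congr' ?_ (EReal.tendsto_coe.mpr hgt)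
          filter_upwards [Metric.ball_mem_nhds xbar hρpos] with x hx using hfin x hx
        exact htend
end

section
/- Let F be Lipschitzian on a set U ⊆ X with constant ℓ > 0, with F(x) ≠ ∅ for all x ∈ U, and let f : X × Y → ℝ ∪ {±∞} be Lipschitzian on (U × Y) ∩ gph F with constant ℓ' > 0 (with respect to the sum norm ‖(x,y)‖ = ‖x‖ + ‖y‖). Define the marginal function φ(x) := inf_{y ∈ F(x)} f(x,y). If φ(x̄) > −∞ for some x̄ ∈ U, then φ is finite and Lipschitzian on U with constant ℓ'(1+ℓ). -/
open Set Topology Metric Pointwise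

/-- Lipschitz property of the inf-marginal function φ(x) = inf_{y ∈ F x} f(x,y). -/
theorem stmt7
    {X Y : Type*} [NormedAddCommGroup X] [NormedSpace ℝ X] [CompleteSpace X]
    [NormedAddCommGroup Y] [NormedSpace ℝ Y] [CompleteSpace Y]
    (F : X → Set Y) (U : Set X) (f : X × Y → EReal) (ℓ ℓ' : ℝ)
    (hℓ : 0 < ℓ) (hℓ' : 0 < ℓ')
    (hFne : ∀ x ∈ U, (F x).Nonempty)
    (hFlip : ∀ x ∈ U, ∀ x' ∈ U, F x ⊆ F x' + Metric.closedBall (0 : Y) (ℓ * ‖x - x'‖))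
    (hffin : ∀ p : X × Y, p.1 ∈ U → p.2 ∈ F p.1 → f p ≠ ⊥ ∧ f p ≠ ⊤)
    (hflip : ∀ p q : X × Y, p.1 ∈ U → p.2 ∈ F p.1 → q.1 ∈ U → q.2 ∈ F q.1 →
      |(f p).toReal - (f q).toReal| ≤ ℓ' * (‖p.1 - q.1‖ + ‖p.2 - q.2‖))
    (xbar : X) (hx : xbar ∈ U)
    (hphibar : (⨅ y ∈ F xbar, f (xbar, y)) ≠ ⊥) :
    (∀ x ∈ U, (⨅ y ∈ F x, f (x, y)) ≠ ⊥ ∧ (⨅ y ∈ F x, f (x, y)) ≠ ⊤) ∧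
    (∀ x ∈ U, ∀ x' ∈ U,
      |(⨅ y ∈ F x, f (x, y)).toReal - (⨅ y ∈ F x', f (x', y)).toReal| ≤
        ℓ' * (1 + ℓ) * ‖x - x'‖) := by

  classical
  set S : X → Set ℝ := fun x => (fun y => (f (x, y)).toReal) '' (F x) with hS
  -- Step A: transfer estimate
  have stepA : ∀ x ∈ U, ∀ x' ∈ U, ∀ y ∈ F x, ∃ y' ∈ F x',
      (f (x', y')).toReal ≤ (f (x, y)).toReal + ℓ' * (1 + ℓ) * ‖x - x'‖ := by
    intro x hxU x' hx'U y hy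
    have hmem := hFlip x hxU x' hx'U hy
    rw [Set.mem_add] at hmem
    obtain ⟨y', hy', b, hb, hsum⟩ := hmem
    rw [mem_closedBall_zero_iff] at hb
    refine ⟨y', hy', ?_⟩
    have hdist : ‖y' - y‖ ≤ ℓ * ‖x - x'‖ := by
      have hyb : y' - y = -b := by rw [← hsum]; abel
      rw [hyb, norm_neg]; exact hb
    have h := hflip (x', y') (x, y) hx'U hy' hxU hy
    have h2 : (f (x', y')).toReal - (f (x, y)).toReal ≤ ℓ' * (‖x' - x‖ + ‖y' - y‖) :=
      (abs_le.mp h).2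
    have h3 : ℓ' * (‖x' - x‖ + ‖y' - y‖) ≤ ℓ' * (1 + ℓ) * ‖x - x'‖ := by
      rw [norm_sub_rev x' x]
      nlinarith [mul_le_mul_of_nonneg_left hdist hℓ'.le, norm_nonneg (x - x')]
    linarith
  -- Step B: lower bound at xbar
  have hphibar_le : ∀ yb ∈ F xbar,
      (⨅ y ∈ F xbar, f (xbar, y)).toReal ≤ (f (xbar, yb)).toReal := by
    intro yb hyb
    have hle : (⨅ y ∈ F xbar, f (xbar, y)) ≤ f (xbar, yb) := iInf₂_le yb hyb
    exact EReal.toReal_le_toReal hle hphibar (hffin (xbar, yb) hx hyb).2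
  set m : ℝ := (⨅ y ∈ F xbar, f (xbar, y)).toReal with hm
  -- Step C: boundedness and nonemptiness of S x
  have hSne : ∀ x ∈ U, (S x).Nonempty := fun x hxU => (hFne x hxU).image _
  have hSbdd : ∀ x ∈ U, BddBelow (S x) := by
    intro x hxU
    refine ⟨m - ℓ' * (1 + ℓ) * ‖x - xbar‖, ?_⟩
    rintro s ⟨y, hy, rfl⟩
    obtain ⟨yb, hyb, hle⟩ := stepA x hxU xbar hx y hy
    have := hphibar_le yb hyb
    linarith
  -- Step D: the EReal infimum equals the coerced real infimum
  have hD : ∀ x ∈ U, (⨅ y ∈ F x, f (x, y)) = ((sInf (S x) : ℝ) : EReal) := by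
    intro x hxU
    apply le_antisymm
    · apply le_of_forall_gt_imp_ge_of_dense
      intro c hc
      induction c using EReal.rec with
      | bot => exact absurd hc (by simp)
      | coe r =>
          have hr : sInf (S x) < r := by exact_mod_cast hc
          obtain ⟨s, hs, hsr⟩ := (csInf_lt_iff (hSbdd x hxU) (hSne x hxU)).mp hr
          obtain ⟨y, hy, rfl⟩ := hs
          calc (⨅ y ∈ F x, f (x, y)) ≤ f (x, y) := iInf₂_le y hy
            _ = ((f (x, y)).toReal : EReal) :=
                (EReal.coe_toReal (hffin (x, y) hxU hy).2 (hffin (x, y) hxU hy).1).symm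
            _ ≤ (r : EReal) := by exact_mod_cast hsr.le
      | top => exact le_top
    · refine le_iInf₂ fun y hy => ?_
      have h1 : sInf (S x) ≤ (f (x, y)).toReal := csInf_le (hSbdd x hxU) ⟨y, hy, rfl⟩
      calc ((sInf (S x) : ℝ) : EReal) ≤ ((f (x, y)).toReal : EReal) := by exact_mod_cast h1
        _ = f (x, y) := EReal.coe_toReal (hffin (x, y) hxU hy).2 (hffin (x, y) hxU hy).1
  have hDr : ∀ x ∈ U, (⨅ y ∈ F x, f (x, y)).toReal = sInf (S x) := by
    intro x hxU; rw [hD x hxU, EReal.toReal_coe]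
  -- Step F: one-sided Lipschitz estimate for sInf
  have hLip1 : ∀ x ∈ U, ∀ x' ∈ U,
      sInf (S x') ≤ sInf (S x) + ℓ' * (1 + ℓ) * ‖x - x'‖ := by
    intro x hxU x' hx'U
    have key : sInf (S x') - ℓ' * (1 + ℓ) * ‖x - x'‖ ≤ sInf (S x) := by
      refine le_csInf (hSne x hxU) ?_
      rintro s ⟨y, hy, rfl⟩
      obtain ⟨y', hy', hle⟩ := stepA x hxU x' hx'U y hy
      have h1 : sInf (S x') ≤ (f (x', y')).toReal := csInf_le (hSbdd x' hx'U) ⟨y', hy', rfl⟩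
      linarith
    linarith
  constructor
  · intro x hxU
    rw [hD x hxU]
    exact ⟨EReal.coe_ne_bot _, EReal.coe_ne_top _⟩
  · intro x hxU x' hx'U
    rw [hDr x hxU, hDr x' hx'U, abs_sub_le_iff]
    constructor
    · have := hLip1 x' hx'U x hxU
      rw [norm_sub_rev x' x] at this
      linarith
    · have := hLip1 x hxU x' hx'U
      linarith
end

section
/- Let F be Lipschitzian on a set U ⊆ X with constant ℓ > 0, with F(x) ≠ ∅ for all x ∈ U, and let f : X × Y → ℝ ∪ {±∞} be Lipschitzian on (U × Y) ∩ gph F with constant ℓ' > 0 (with respect to the sum norm ‖(x,y)‖ = ‖x‖ + ‖y‖). Define the marginal function Φ(x) := sup_{y ∈ F(x)} f(x,y). If Φ(x̄) < +∞ for some x̄ ∈ U, then Φ is finite and Lipschitzian on U with constant ℓ'(1+ℓ). -/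
open Set Topology Metric Pointwise

/-- Lipschitz property of the sup-marginal function Φ(x) = sup_{y ∈ F x} f(x,y). -/
theorem stmt8
    {X Y : Type*} [NormedAddCommGroup X] [NormedSpace ℝ X] [CompleteSpace X]
    [NormedAddCommGroup Y] [NormedSpace ℝ Y] [CompleteSpace Y]
    (F : X → Set Y) (U : Set X) (f : X × Y → EReal) (ℓ ℓ' : ℝ)
    (hℓ : 0 < ℓ) (hℓ' : 0 < ℓ')
    (hFne : ∀ x ∈ U, (F x).Nonempty)
    (hFlip : ∀ x ∈ U, ∀ x' ∈ U, F x ⊆ F x' + Metric.closedBall (0 : Y) (ℓ * ‖x - x'‖))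
    (hffin : ∀ p : X × Y, p.1 ∈ U → p.2 ∈ F p.1 → f p ≠ ⊥ ∧ f p ≠ ⊤)
    (hflip : ∀ p q : X × Y, p.1 ∈ U → p.2 ∈ F p.1 → q.1 ∈ U → q.2 ∈ F q.1 →
      |(f p).toReal - (f q).toReal| ≤ ℓ' * (‖p.1 - q.1‖ + ‖p.2 - q.2‖))
    (xbar : X) (hx : xbar ∈ U)
    (hPhibar : (⨆ y ∈ F xbar, f (xbar, y)) ≠ ⊤) :
    (∀ x ∈ U, (⨆ y ∈ F x, f (x, y)) ≠ ⊥ ∧ (⨆ y ∈ F x, f (x, y)) ≠ ⊤) ∧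
    (∀ x ∈ U, ∀ x' ∈ U,
      |(⨆ y ∈ F x, f (x, y)).toReal - (⨆ y ∈ F x', f (x', y)).toReal| ≤
        ℓ' * (1 + ℓ) * ‖x - x'‖) := by
  have hL : ∀ x ∈ U, ∀ x' ∈ U, ∀ y ∈ F x, ∃ y' ∈ F x',
      (f (x, y)).toReal ≤ (f (x', y')).toReal + ℓ' * (1 + ℓ) * ‖x - x'‖ := by
    intro x hxU x' hx'U y hy
    obtain ⟨y', hy', b, hb, hsum⟩ := Set.mem_add.mp (hFlip x hxU x' hx'U hy)
    refine ⟨y', hy', ?_⟩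
    have hyb : ‖y - y'‖ ≤ ℓ * ‖x - x'‖ := by
      have h : y - y' = b := by rw [← hsum]; abel
      rw [h]; simpa using mem_closedBall_zero_iff.mp hb
    have habs := hflip (x, y) (x', y') hxU hy hx'U hy'
    have h1 : (f (x, y)).toReal - (f (x', y')).toReal ≤ ℓ' * (‖x - x'‖ + ‖y - y'‖) :=
      (le_abs_self _).trans habs
    nlinarith [norm_nonneg (x - x'), hℓ'.le]
  have hNB : ∀ x ∈ U, (⨆ y ∈ F x, f (x, y)) ≠ ⊥ := by
    intro x hxU
    obtain ⟨y, hy⟩ := hFne x hxU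
    have hle := le_iSup₂ (f := fun y _ => f (x, y)) y hy
    intro h
    exact (hffin (x, y) hxU hy).1 (le_bot_iff.mp (h ▸ hle))
  have hUB : ∀ x ∈ U, ∀ x' ∈ U, (⨆ y ∈ F x', f (x', y)) ≠ ⊤ →
      (⨆ y ∈ F x, f (x, y)) ≤
        (((⨆ y ∈ F x', f (x', y)).toReal + ℓ' * (1 + ℓ) * ‖x - x'‖ : ℝ) : EReal) := by
    intro x hxU x' hx'U htop
    refine iSup₂_le fun y hy => ?_
    obtain ⟨y', hy', hle⟩ := hL x hxU x' hx'U y hy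
    obtain ⟨hbot, htop'⟩ := hffin (x, y) hxU hy
    obtain ⟨hbot', _⟩ := hffin (x', y') hx'U hy'
    have h1 : f (x', y') ≤ ⨆ y ∈ F x', f (x', y) :=
      le_iSup₂ (f := fun y _ => f (x', y)) y' hy'
    have h2 : (f (x', y')).toReal ≤ (⨆ y ∈ F x', f (x', y)).toReal :=
      EReal.toReal_le_toReal h1 hbot' htop
    calc f (x, y) = (((f (x, y)).toReal : ℝ) : EReal) := (EReal.coe_toReal htop' hbot).symm
      _ ≤ _ := by exact_mod_cast hle.trans (by linarith)
  have hNT : ∀ x ∈ U, (⨆ y ∈ F x, f (x, y)) ≠ ⊤ := by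
    intro x hxU
    exact ne_top_of_le_ne_top (EReal.coe_ne_top _) (hUB x hxU xbar hx hPhibar)
  refine ⟨fun x hxU => ⟨hNB x hxU, hNT x hxU⟩, ?_⟩
  have key : ∀ x ∈ U, ∀ x' ∈ U,
      (⨆ y ∈ F x, f (x, y)).toReal ≤ (⨆ y ∈ F x', f (x', y)).toReal
        + ℓ' * (1 + ℓ) * ‖x - x'‖ := by
    intro x hxU x' hx'U
    have := EReal.toReal_le_toReal (hUB x hxU x' hx'U (hNT x' hx'U)) (hNB x hxU)
      (EReal.coe_ne_top _)
    simpa only [EReal.toReal_coe] using this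
  intro x hxU x' hx'U
  rw [abs_sub_le_iff]
  constructor
  · linarith [key x hxU x' hx'U]
  · have := key x' hx'U x hxU
    rw [norm_sub_rev x' x] at this
    linarith
end

section
/- Let ρ > 0 be a Lipschitz constant of the Gerstewitz functional Ψ_e on Y. If F is Lipschitzian with constant ℓ > 0 on a neighborhood U of x̄ (with F(x) ≠ ∅ for x ∈ U) and there exists ȳ ∈ Y with g_l(x̄,ȳ) > −∞, then g_l is finite and Lipschitzian on U × Y with constant ρ(1+ℓ) (with respect to the sum norm on X × Y). In particular, the condition g_l(x̄,ȳ) > −∞ can be replaced by ȳ ∈ WMin(F(x̄),K). -/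
open Set Topology Metric Pointwise

/-- if F is Lipschitz on a neighborhood U of x̄ and g_l(x̄,ȳ) > -∞ for some ȳ
(in particular if WMin(F(x̄),K) ≠ ∅), then g_l is finite and Lipschitz on U × Y with
constant ρ(1+ℓ), ρ being a Lipschitz constant of Ψ_e. -/
theorem stmt9
    {X Y : Type*} [NormedAddCommGroup X] [NormedSpace ℝ X] [CompleteSpace X]
    [NormedAddCommGroup Y] [NormedSpace ℝ Y] [CompleteSpace Y]
    (K : Set Y) (e : Y) (F : X → Set Y) (Ω : Set X) (xbar : X)
    (hKcl : IsClosed K) (hKcv : Convex ℝ K)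
    (hKcone : ∀ t : ℝ, 0 ≤ t → ∀ y ∈ K, t • y ∈ K)
    (hKpt : K ∩ (-K) = {0})
    (he : e ∈ interior K)
    (hΩne : Ω.Nonempty) (hΩcl : IsClosed Ω)
    (hΩdom : Ω ⊆ interior {x | (F x).Nonempty})
    (hxΩ : xbar ∈ Ω)
    (ρ ℓ : ℝ) (hρpos : 0 < ρ) (hℓpos : 0 < ℓ)
    (hψlip : ∀ y y' : Y, |psiE K e y - psiE K e y'| ≤ ρ * ‖y - y'‖)
    (U : Set X) (hU : U ∈ 𝓝 xbar)
    (hFne : ∀ x ∈ U, (F x).Nonempty)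
    (hFlip : ∀ x ∈ U, ∀ x' ∈ U, F x ⊆ F x' + Metric.closedBall (0 : Y) (ℓ * ‖x - x'‖))
    (hfin : (∃ ybar : Y, glow K e F xbar ybar ≠ ⊥) ∨ (wMinSet (F xbar) K).Nonempty) :
    (∀ x ∈ U, ∀ z : Y, glow K e F x z ≠ ⊥ ∧ glow K e F x z ≠ ⊤) ∧
    (∀ x ∈ U, ∀ x' ∈ U, ∀ z z' : Y,
      |(glow K e F x z).toReal - (glow K e F x' z').toReal| ≤
        ρ * (1 + ℓ) * (‖x - x'‖ + ‖z - z'‖)) := by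
  have hxbarU : xbar ∈ U := mem_of_mem_nhds hU
  -- K is closed under addition
  have hKadd : ∀ a ∈ K, ∀ b ∈ K, a + b ∈ K := by
    intro a ha b hb
    have hmid : (1/2 : ℝ) • a + (1/2 : ℝ) • b ∈ K :=
      hKcv ha hb (by norm_num) (by norm_num) (by norm_num)
    have := hKcone 2 (by norm_num) _ hmid
    have h2 : (2 : ℝ) • ((1/2 : ℝ) • a + (1/2 : ℝ) • b) = a + b := by
      rw [smul_add, smul_smul, smul_smul]; norm_num
    rwa [h2] at this
  -- K + interior K ⊆ interior K
  have hKint : ∀ c ∈ K, ∀ w ∈ interior K, c + w ∈ interior K := by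
    intro c hc w hw
    obtain ⟨s, hsK, hso, hws⟩ := mem_interior.mp hw
    refine mem_interior.mpr ⟨(fun u => c + u) '' s, ?_, ?_, ⟨w, hws, rfl⟩⟩
    · rintro _ ⟨u, hu, rfl⟩; exact hKadd c hc u (hsK hu)
    · exact (isOpenMap_add_left c) _ hso
  -- lower bound at (xbar, ybar)
  obtain ⟨ybar, m, hm⟩ : ∃ ybar m, ∀ y ∈ F xbar, m ≤ psiE K e (y - ybar) := by
    rcases hfin with ⟨ybar, hne⟩ | ⟨ybar, hyb, hwm⟩
    · refine ⟨ybar, (glow K e F xbar ybar).toReal, fun y hy => ?_⟩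
      have h1 : glow K e F xbar ybar ≤ (psiE K e (y - ybar) : EReal) := iInf₂_le y hy
      have := EReal.toReal_le_toReal h1 hne (EReal.coe_ne_top _)
      simpa using this
    · refine ⟨ybar, 0, fun y hy => ?_⟩
      by_contra h
      push_neg at h
      have hSne : {t : ℝ | t • e - (y - ybar) ∈ K}.Nonempty := by
        by_contra hS
        rw [Set.not_nonempty_iff_eq_empty] at hS
        rw [psiE, hS, Real.sInf_empty] at h; linarith
      obtain ⟨t, ht, htneg⟩ := exists_lt_of_csInf_lt hSne h
      -- (-t) • e ∈ interior K
      have hte : (-t : ℝ) • e ∈ interior K := by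
        have h1 : (-t : ℝ) • e ∈ (-t : ℝ) • interior K := smul_mem_smul_set he
        have h2 : (-t : ℝ) • interior K = interior ((-t : ℝ) • K) :=
          (interior_smul₀ (by linarith : (-t : ℝ) ≠ 0) K).symm
        have h3 : (-t : ℝ) • K ⊆ K := by
          rintro _ ⟨u, hu, rfl⟩; exact hKcone (-t) (by linarith) u hu
        exact interior_mono h3 (h2 ▸ h1)
      have hmem : ybar - y ∈ interior K := by
        have := hKint _ ht _ hte
        have heq : t • e - (y - ybar) + (-t : ℝ) • e = ybar - y := by
          rw [neg_smul]; abel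
        rwa [heq] at this
      exact hwm y hy hmem
  -- generic lower bound
  have hlow : ∀ x ∈ U, ∀ z : Y, ∀ y ∈ F x,
      m - ρ * (ℓ * ‖x - xbar‖ + ‖z - ybar‖) ≤ psiE K e (y - z) := by
    intro x hx z y hy
    obtain ⟨y0, hy0, b, hb, rfl⟩ := hFlip x hx xbar hxbarU hy
    have hbn : ‖b‖ ≤ ℓ * ‖x - xbar‖ := by
      simpa [mem_closedBall, dist_zero_right] using hb
    have h1 := hψlip (y0 + b - z) (y0 - ybar)
    have h2 : ‖(y0 + b - z) - (y0 - ybar)‖ ≤ ‖b‖ + ‖z - ybar‖ := by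
      have heq : (y0 + b - z) - (y0 - ybar) = b - (z - ybar) := by abel
      rw [heq]; exact norm_sub_le _ _
    have h3 := hm y0 hy0
    have habs := abs_le.mp h1
    have h4 : ρ * ‖(y0 + b - z) - (y0 - ybar)‖ ≤ ρ * (ℓ * ‖x - xbar‖ + ‖z - ybar‖) := by
      apply mul_le_mul_of_nonneg_left _ hρpos.le
      linarith
    linarith [habs.1, habs.2]
  -- finiteness
  have hfinite : ∀ x ∈ U, ∀ z : Y, glow K e F x z ≠ ⊥ ∧ glow K e F x z ≠ ⊤ := by
    intro x hx z
    constructor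
    · have hle : ((m - ρ * (ℓ * ‖x - xbar‖ + ‖z - ybar‖) : ℝ) : EReal) ≤ glow K e F x z :=
        le_iInf₂ fun y hy => EReal.coe_le_coe_iff.mpr (hlow x hx z y hy)
      intro hbot
      exact EReal.coe_ne_bot _ (le_bot_iff.mp (hbot ▸ hle))
    · obtain ⟨y, hy⟩ := hFne x hx
      exact ne_top_of_le_ne_top (EReal.coe_ne_top _) (iInf₂_le y hy)
  -- one-sided Lipschitz estimate
  have key : ∀ x ∈ U, ∀ x' ∈ U, ∀ z z' : Y,
      (glow K e F x' z').toReal ≤ (glow K e F x z).toReal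
        + ρ * (1 + ℓ) * (‖x - x'‖ + ‖z - z'‖) := by
    intro x hx x' hx' z z'
    refine le_of_forall_pos_le_add fun ε hε => ?_
    set a := (glow K e F x z).toReal with ha
    have hcoe : ((a : ℝ) : EReal) = glow K e F x z :=
      EReal.coe_toReal (hfinite x hx z).2 (hfinite x hx z).1
    have hlt : glow K e F x z < ((a + ε : ℝ) : EReal) := by
      rw [← hcoe]; exact_mod_cast (lt_add_of_pos_right a hε)
    rw [glow] at hlt
    obtain ⟨y, hy2⟩ := iInf_lt_iff.mp hlt
    obtain ⟨hy, hylt⟩ := iInf_lt_iff.mp hy2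
    have hylt' : psiE K e (y - z) < a + ε := by exact_mod_cast hylt
    obtain ⟨y', hy', b, hb, rfl⟩ := hFlip x hx x' hx' hy
    have hbn : ‖b‖ ≤ ℓ * ‖x - x'‖ := by
      simpa [mem_closedBall, dist_zero_right] using hb
    have h1 := hψlip (y' - z') (y' + b - z)
    have h2 : ‖(y' - z') - (y' + b - z)‖ ≤ ‖b‖ + ‖z - z'‖ := by
      have heq : (y' - z') - (y' + b - z) = (z - z') - b := by abel
      rw [heq]
      calc ‖(z - z') - b‖ ≤ ‖z - z'‖ + ‖b‖ := norm_sub_le _ _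
        _ = ‖b‖ + ‖z - z'‖ := by ring
    have habs := abs_le.mp h1
    have h4 : ρ * ‖(y' - z') - (y' + b - z)‖ ≤ ρ * (ℓ * ‖x - x'‖ + ‖z - z'‖) := by
      apply mul_le_mul_of_nonneg_left _ hρpos.le
      linarith
    have h5 : psiE K e (y' - z') ≤ psiE K e (y' + b - z)
        + ρ * (ℓ * ‖x - x'‖ + ‖z - z'‖) := by linarith [habs.2]
    have h6 : glow K e F x' z' ≤ ((psiE K e (y' - z') : ℝ) : EReal) := iInf₂_le y' hy'
    have h7 : (glow K e F x' z').toReal ≤ psiE K e (y' - z') := by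
      have := EReal.toReal_le_toReal h6 (hfinite x' hx' z').1 (EReal.coe_ne_top _)
      simpa using this
    have h8 : ρ * (ℓ * ‖x - x'‖ + ‖z - z'‖) ≤ ρ * (1 + ℓ) * (‖x - x'‖ + ‖z - z'‖) := by
      nlinarith [mul_nonneg hρpos.le (norm_nonneg (x - x')),
        mul_nonneg (mul_nonneg hρpos.le hℓpos.le) (norm_nonneg (z - z'))]
    linarith
  refine ⟨hfinite, fun x hx x' hx' z z' => abs_le.mpr ⟨?_, ?_⟩⟩
  · have h := key x hx x' hx' z z'
    linarith
  · have h := key x' hx' x hx z' z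
    rw [norm_sub_rev x', norm_sub_rev z'] at h
    linarith
end

section
/- Let F be ⪯ˡ_K-convex and locally l-bounded at x̄, and let ȳ ∈ WMin(E_F(x̄),K), where E_F(x) := F(x) + K. Then the convex subdifferential of the convex function g_{l,ȳ} := g_l(·,ȳ) at x̄ satisfies ∂g_{l,ȳ}(x̄) = ⋃_{y* ∈ ∂Ψ_e(0)} D*E_F(x̄,ȳ)(y*), where x* ∈ D*E_F(x̄,ȳ)(y*) means ⟨x*, x − x̄⟩ ≤ ⟨y*, y − ȳ⟩ for all (x,y) with y ∈ E_F(x). -/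
open Set Topology Metric Pointwise

set_option maxHeartbeats 1000000 in
/-- for F ⪯ˡ_K-convex and locally l-bounded at x̄, and ȳ ∈ WMin(E_F(x̄),K),
the convex subdifferential of g_{l,ȳ} = g_l(·,ȳ) at x̄ equals the union over y* ∈ ∂Ψ_e(0)
of the coderivatives D*E_F(x̄,ȳ)(y*), where E_F(x) = F(x) + K. -/
theorem stmt13
    {X Y : Type*} [NormedAddCommGroup X] [NormedSpace ℝ X] [CompleteSpace X]
    [NormedAddCommGroup Y] [NormedSpace ℝ Y] [CompleteSpace Y]
    (K : Set Y) (e : Y) (F : X → Set Y) (Ω : Set X) (xbar : X)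
    (hKcl : IsClosed K) (hKcv : Convex ℝ K)
    (hKcone : ∀ t : ℝ, 0 ≤ t → ∀ y ∈ K, t • y ∈ K)
    (hKpt : K ∩ (-K) = {0})
    (he : e ∈ interior K)
    (hΩne : Ω.Nonempty) (hΩcl : IsClosed Ω)
    (hΩdom : Ω ⊆ interior {x | (F x).Nonempty})
    (hxΩ : xbar ∈ Ω)
    (hconv : ∀ x₁ x₂ : X, (F x₁).Nonempty → (F x₂).Nonempty → ∀ t : ℝ, t ∈ Set.Ioo (0:ℝ) 1 →
      t • F x₁ + (1 - t) • F x₂ ⊆ F (t • x₁ + (1 - t) • x₂) + K)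
    (hbd : ∃ μ > (0:ℝ), ∃ U ∈ 𝓝 xbar, ∀ x ∈ U,
      (F x ∩ {y : Y | y + μ • e ∈ K ∧ μ • e - y ∈ K}) + K = F x + K)
    (ybar : Y) (hybar : ybar ∈ wMinSet (F xbar + K) K) :
    {xs : X →L[ℝ] ℝ | ∀ x : X,
        glow K e F xbar ybar + ((xs (x - xbar) : ℝ) : EReal) ≤ glow K e F x ybar} =
      {xs : X →L[ℝ] ℝ | ∃ ys : Y →L[ℝ] ℝ, (∀ y : Y, ys y ≤ psiE K e y) ∧
        ∀ x : X, ∀ y ∈ F x + K, xs (x - xbar) ≤ ys (y - ybar)} := by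
  classical
  obtain ⟨hyE, hymin⟩ := hybar
  have heK : e ∈ K := interior_subset he
  have h0K : (0:Y) ∈ K := by simpa using hKcone 0 le_rfl e heK
  have h0int : (0:Y) ∉ interior K := by simpa using hymin ybar hyE
  have he0 : e ≠ 0 := by rintro rfl; exact h0int he
  -- K + K ⊆ K
  have hKK : ∀ a ∈ K, ∀ b ∈ K, a + b ∈ K := by
    intro a ha b hb
    have hhalf : (2:ℝ)⁻¹ • a + (2:ℝ)⁻¹ • b ∈ K :=
      hKcv ha hb (by norm_num) (by norm_num) (by norm_num)
    have h2 := hKcone 2 (by norm_num) _ hhalf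
    rw [smul_add, smul_smul, smul_smul] at h2
    norm_num at h2
    exact h2
  -- K + interior K ⊆ interior K
  have hKint : ∀ a ∈ K, ∀ b ∈ interior K, a + b ∈ interior K := by
    intro a ha b hb
    have hopen : IsOpen ((fun z => a + z) '' interior K) :=
      (Homeomorph.addLeft a).isOpenMap _ isOpen_interior
    have hsub : (fun z => a + z) '' interior K ⊆ K := by
      rintro _ ⟨z, hz, rfl⟩; exact hKK a ha z (interior_subset hz)
    exact interior_maximal hsub hopen ⟨b, hb, rfl⟩
  -- positive scaling preserves interior K
  have hsint : ∀ t : ℝ, 0 < t → ∀ b ∈ interior K, t • b ∈ interior K := by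
    intro t ht b hb
    have hopen : IsOpen ((fun z => t • z) '' interior K) :=
      (Homeomorph.smulOfNeZero t ht.ne').isOpenMap _ isOpen_interior
    have hsub : (fun z => t • z) '' interior K ⊆ K := by
      rintro _ ⟨z, hz, rfl⟩; exact hKcone t ht.le z (interior_subset hz)
    exact interior_maximal hsub hopen ⟨b, hb, rfl⟩
  have hnegE : -e ∉ K := by
    intro h
    have : e ∈ K ∩ (-K) := ⟨heK, by simpa using h⟩
    rw [hKpt] at this
    exact he0 (by simpa using this)
  -- the sets S y
  set S : Y → Set ℝ := fun y => {t : ℝ | t • e - y ∈ K} with hS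
  have hpsi : ∀ y, psiE K e y = sInf (S y) := fun _ => rfl
  -- nonemptiness of S y
  obtain ⟨ε, hε, hball⟩ : ∃ ε > 0, ball e ε ⊆ K := by
    obtain ⟨ε, hε, hb⟩ := Metric.isOpen_iff.mp isOpen_interior e he
    exact ⟨ε, hε, hb.trans interior_subset⟩
  have hSne : ∀ y : Y, (S y).Nonempty := by
    intro y
    refine ⟨‖y‖ / ε + 1, ?_⟩
    set t : ℝ := ‖y‖ / ε + 1 with htdef
    have ht : 0 < t := by positivity
    have hmem : e - t⁻¹ • y ∈ ball e ε := by
      rw [mem_ball, dist_eq_norm]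
      have : e - t⁻¹ • y - e = -(t⁻¹ • y) := by abel
      rw [this, norm_neg, norm_smul, norm_inv, Real.norm_eq_abs, abs_of_pos ht]
      rw [inv_mul_lt_iff₀ ht]
      have : ‖y‖ < t * ε := by
        rw [htdef, add_mul, one_mul, div_mul_cancel₀ _ hε.ne']
        linarith
      exact this
    have := hKcone t ht.le _ (hball hmem)
    rw [smul_sub, smul_smul, mul_inv_cancel₀ ht.ne', one_smul] at this
    exact this
  -- boundedness below of S y
  obtain ⟨δ, hδ, hball'⟩ : ∃ δ > 0, ball (-e) δ ⊆ Kᶜ :=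
    Metric.isOpen_iff.mp hKcl.isOpen_compl (-e) hnegE
  have hSbdd : ∀ y : Y, BddBelow (S y) := by
    intro y
    refine ⟨-(‖y‖ / δ), fun t ht => ?_⟩
    by_contra hlt
    push_neg at hlt
    have htneg : t < 0 := lt_of_lt_of_le hlt (neg_nonpos.mpr (by positivity))
    have hmem := hKcone (-t)⁻¹ (inv_nonneg.mpr (by linarith)) _ ht
    rw [smul_sub, smul_smul] at hmem
    have h1 : (-t)⁻¹ * t = -1 := by
      rw [inv_neg, neg_mul, inv_mul_cancel₀ htneg.ne]
    rw [h1, neg_one_smul] at hmem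
    have hb : -e - (-t)⁻¹ • y ∈ ball (-e) δ := by
      rw [mem_ball, dist_eq_norm]
      have : -e - (-t)⁻¹ • y - -e = -((-t)⁻¹ • y) := by abel
      rw [this, norm_neg, norm_smul, norm_inv, Real.norm_eq_abs, abs_of_pos (by linarith : (0:ℝ) < -t)]
      rw [inv_mul_lt_iff₀ (by linarith : (0:ℝ) < -t)]
      have h2 : ‖y‖ / δ < -t := by linarith
      have := (div_lt_iff₀ hδ).mp h2
      linarith [this]
    exact hball' hb hmem
  -- monotonicity : k ∈ K → psiE y ≤ psiE (y + k)
  have hmono : ∀ y k, k ∈ K → psiE K e y ≤ psiE K e (y + k) := by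
    intro y k hk
    refine csInf_le_csInf (hSbdd y) (hSne (y + k)) ?_
    intro t ht
    have heq : t • e - y = (t • e - (y + k)) + k := by abel
    have ht' : t • e - (y + k) ∈ K := ht
    show t • e - y ∈ K
    rw [heq]
    exact hKK _ ht' _ hk
  -- psiE v < t → t•e - v ∈ interior K
  have hlt : ∀ v t, psiE K e v < t → t • e - v ∈ interior K := by
    intro v t h
    obtain ⟨t', ht', hlt'⟩ := exists_lt_of_csInf_lt (hSne v) h
    have h2 : (t - t') • e ∈ interior K := hsint _ (by linarith) e he
    have h3 := hKint _ ht' _ h2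
    have : t' • e - v + (t - t') • e = t • e - v := by
      rw [sub_smul]; abel
    rwa [this] at h3
  -- t•e - v ∈ interior K → psiE v < t
  have hgt : ∀ v t, t • e - v ∈ interior K → psiE K e v < t := by
    intro v t h
    obtain ⟨ε', hε', hb⟩ := Metric.isOpen_iff.mp isOpen_interior _ h
    have hne : (0:ℝ) < ‖e‖ := by
      simpa using norm_pos_iff.mpr he0
    set d : ℝ := ε' / (2 * ‖e‖) with hd
    have hdpos : 0 < d := by positivity
    have hmem : (t - d) • e - v ∈ ball (t • e - v) ε' := by
      rw [mem_ball, dist_eq_norm]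
      have : (t - d) • e - v - (t • e - v) = -(d • e) := by rw [sub_smul]; abel
      rw [this, norm_neg, norm_smul, Real.norm_eq_abs, abs_of_pos hdpos, hd]
      rw [div_mul_eq_mul_div, mul_comm]
      rw [div_lt_iff₀ (by positivity)]
      nlinarith
    have hin : (t - d) • e - v ∈ K := interior_subset (hb hmem)
    have : t - d ∈ S v := hin
    calc psiE K e v ≤ t - d := csInf_le (hSbdd v) this
      _ < t := by linarith
  -- 0 ≤ psiE (y - ybar) for y ∈ F xbar
  have hΨpos : ∀ y ∈ F xbar, (0:ℝ) ≤ psiE K e (y - ybar) := by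
    intro y hy
    by_contra hneg
    push_neg at hneg
    obtain ⟨t, ht, htneg⟩ := exists_lt_of_csInf_lt (hSne (y - ybar)) hneg
    have h2 : (-t) • e ∈ interior K := hsint _ (by linarith) e he
    have h3 := hKint _ ht _ h2
    have heq : t • e - (y - ybar) + (-t) • e = ybar - y := by
      rw [neg_smul]; abel
    rw [heq] at h3
    exact hymin y ⟨y, hy, 0, h0K, add_zero y⟩ h3
  have hglow0 : (0:EReal) ≤ glow K e F xbar ybar := by
    rw [glow]
    exact le_iInf₂ fun y hy => by exact_mod_cast hΨpos y hy
  have hglowle : glow K e F xbar ybar ≤ 0 := by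
    obtain ⟨y₀, hy₀, k, hk, hsum⟩ := hyE
    have h1 : (0:ℝ) ∈ S (y₀ - ybar) := by
      rw [hS]
      simp only [mem_setOf_eq, zero_smul, zero_sub, neg_sub]
      rw [← hsum]
      simpa using hk
    have h2 : psiE K e (y₀ - ybar) ≤ 0 := csInf_le (hSbdd _) h1
    calc glow K e F xbar ybar ≤ (psiE K e (y₀ - ybar) : EReal) := iInf₂_le y₀ hy₀
      _ ≤ 0 := by exact_mod_cast h2
  ext xs
  simp only [Set.mem_setOf_eq]
  constructor
  · -- hard direction
    intro hx
    -- key inequality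
    have hkey : ∀ x : X, ∀ y ∈ F x + K, xs (x - xbar) ≤ psiE K e (y - ybar) := by
      rintro x y hy
      obtain ⟨y₀, hy₀, k, hk, rfl⟩ := hy
      have h1 : glow K e F x ybar ≤ (psiE K e (y₀ - ybar) : EReal) := iInf₂_le y₀ hy₀
      have h2 : ((xs (x - xbar) : ℝ) : EReal) ≤ glow K e F x ybar := by
        calc ((xs (x - xbar) : ℝ) : EReal) = 0 + ((xs (x - xbar) : ℝ) : EReal) := by
              rw [zero_add]
          _ ≤ glow K e F xbar ybar + ((xs (x - xbar) : ℝ) : EReal) :=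
              add_le_add_left hglow0 _
          _ ≤ glow K e F x ybar := hx x
      have h3 : psiE K e (y₀ - ybar) ≤ psiE K e (y₀ + k - ybar) := by
        have := hmono (y₀ - ybar) k hk
        have heq : y₀ - ybar + k = y₀ + k - ybar := by abel
        rwa [heq] at this
      have h4 : xs (x - xbar) ≤ psiE K e (y₀ - ybar) := by
        exact_mod_cast h2.trans h1
      linarith
    -- the two convex sets
    set A : Set (Y × ℝ) := {p | p.2 • e - p.1 ∈ interior K} with hA
    set B : Set (Y × ℝ) := {p | ∃ x : X, ∃ y ∈ F x + K, p.1 = y - ybar ∧ p.2 ≤ xs (x - xbar)}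
      with hB
    have hAopen : IsOpen A :=
      IsOpen.preimage ((continuous_snd.smul continuous_const).sub continuous_fst)
        isOpen_interior
    have hAconv : Convex ℝ A := by
      intro p hp q hq a b ha hb hab
      have h1 : (a • p + b • q).2 • e - (a • p + b • q).1
          = a • (p.2 • e - p.1) + b • (q.2 • e - q.1) := by
        simp only [Prod.fst_add, Prod.snd_add, Prod.smul_fst, Prod.smul_snd, smul_eq_mul]
        module
      rw [hA, mem_setOf_eq, h1]
      exact hKcv.interior hp hq ha hb hab
    have hBconv : Convex ℝ B := by
      rintro ⟨v₁, s₁⟩ ⟨x₁, y₁, hy₁, rfl, hs₁⟩ ⟨v₂, s₂⟩ ⟨x₂, y₂, hy₂, rfl, hs₂⟩ a b ha hb hab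
      rcases eq_or_lt_of_le ha with rfl | ha'
      · simp only [zero_add] at hab; subst hab
        simp only [zero_smul, one_smul, zero_add]
        exact ⟨x₂, y₂, hy₂, rfl, hs₂⟩
      rcases eq_or_lt_of_le hb with rfl | hb'
      · simp only [add_zero] at hab; subst hab
        simp only [zero_smul, one_smul, add_zero]
        exact ⟨x₁, y₁, hy₁, rfl, hs₁⟩
      have hb1 : b = 1 - a := by linarith
      subst hb1
      obtain ⟨a₁, ha₁, k₁, hk₁, rfl⟩ := hy₁
      obtain ⟨a₂, ha₂, k₂, hk₂, rfl⟩ := hy₂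
      have hmem : a • a₁ + (1 - a) • a₂ ∈ a • F x₁ + (1 - a) • F x₂ :=
        Set.add_mem_add (Set.smul_mem_smul_set ha₁) (Set.smul_mem_smul_set ha₂)
      have hmem2 := hconv x₁ x₂ ⟨a₁, ha₁⟩ ⟨a₂, ha₂⟩ a ⟨ha', by linarith⟩ hmem
      obtain ⟨c, hc, k, hk, hck₀⟩ := hmem2
      have hck : c + k = a • a₁ + (1 - a) • a₂ := hck₀
      refine ⟨a • x₁ + (1 - a) • x₂, c + (k + (a • k₁ + (1 - a) • k₂)), ?_, ?_, ?_⟩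
      · exact ⟨c, hc, k + (a • k₁ + (1 - a) • k₂),
          hKK _ hk _ (hKK _ (hKcone a ha _ hk₁) _ (hKcone _ (by linarith) _ hk₂)), rfl⟩
      · show a • (a₁ + k₁ - ybar) + (1 - a) • (a₂ + k₂ - ybar)
          = c + (k + (a • k₁ + (1 - a) • k₂)) - ybar
        have heq : c + (k + (a • k₁ + (1 - a) • k₂)) - ybar
            = (c + k) + (a • k₁ + (1 - a) • k₂) - ybar := by abel
        rw [heq, hck]
        module
      · show a • s₁ + (1 - a) • s₂ ≤ xs (a • x₁ + (1 - a) • x₂ - xbar)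
        have hs₁' : s₁ ≤ xs (x₁ - xbar) := hs₁
        have hs₂' : s₂ ≤ xs (x₂ - xbar) := hs₂
        have heq : a • x₁ + (1 - a) • x₂ - xbar = a • (x₁ - xbar) + (1 - a) • (x₂ - xbar) := by
          module
        rw [heq, map_add, map_smul, map_smul]
        simp only [smul_eq_mul]
        have h1 := mul_le_mul_of_nonneg_left hs₁' ha
        have h2 := mul_le_mul_of_nonneg_left hs₂' hb
        linarith
    have hdisj : Disjoint A B := by
      rw [Set.disjoint_left]
      rintro ⟨v, s⟩ hpA ⟨x, y, hy, rfl, h2⟩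
      have h3 : psiE K e (y - ybar) < s := hgt (y - ybar) s hpA
      have h4 := hkey x y hy
      linarith
    obtain ⟨f, u, hfA, hfB⟩ := geometric_hahn_banach_open hAconv hAopen hBconv hdisj
    have hB0 : ((0:Y), (0:ℝ)) ∈ B := ⟨xbar, ybar, hyE, by simp, by simp⟩
    have hu0 : u ≤ 0 := by
      have h := hfB _ hB0
      rwa [show ((0:Y), (0:ℝ)) = (0 : Y × ℝ) from rfl, map_zero] at h
    have hA1 : ∀ t : ℝ, 0 < t → ((0:Y), t) ∈ A := by
      intro t ht
      show t • e - 0 ∈ interior K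
      rw [sub_zero]
      exact hsint t ht e he
    set c : ℝ := f (0, 1) with hc
    have hcneg : c < 0 := lt_of_lt_of_le (hfA _ (hA1 1 one_pos)) hu0
    have hu0' : 0 ≤ u := by
      by_contra hu
      push_neg at hu
      have ht : 0 < u / (2 * c) := div_pos_of_neg_of_neg hu (by linarith)
      have := hfA _ (hA1 _ ht)
      have heq : ((0:Y), u / (2 * c)) = (u / (2 * c)) • ((0:Y), (1:ℝ)) := by simp
      rw [heq, map_smul, smul_eq_mul] at this
      have hc0 : c ≠ 0 := ne_of_lt hcneg
      have hcc : u / (2 * c) * f (0, 1) = u / 2 := by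
        rw [← hc]; field_simp
      rw [hcc] at this
      linarith
    have hu : u = 0 := le_antisymm hu0 hu0'
    set l : Y →L[ℝ] ℝ := f.comp (ContinuousLinearMap.inl ℝ Y ℝ) with hl
    have hf : ∀ v t, f (v, t) = l v + t * c := by
      intro v t
      have h1 : ((v, t) : Y × ℝ) = (v, 0) + t • ((0:Y), (1:ℝ)) := by
        simp [Prod.ext_iff]
      rw [h1, map_add, map_smul, smul_eq_mul, ← hc]
      simp only [hl, ContinuousLinearMap.comp_apply, ContinuousLinearMap.inl_apply]
    -- A side : l v + c * psiE v ≤ 0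
    have hAside : ∀ v : Y, l v + psiE K e v * c ≤ 0 := by
      intro v
      by_contra hcon
      push_neg at hcon
      set r : ℝ := l v + psiE K e v * c with hr
      set d : ℝ := r / (2 * (-c)) with hd2
      have hdpos : 0 < d := by
        apply div_pos hcon; linarith
      have hmem : (v, psiE K e v + d) ∈ A := hlt v _ (lt_add_of_pos_right _ hdpos)
      have h5 := hfA _ hmem
      rw [hf, hu] at h5
      have hc0 : c ≠ 0 := ne_of_lt hcneg
      have hdc : d * c = -r / 2 := by
        rw [hd2]; field_simp
      nlinarith
    -- define ys
    have hcpos : 0 < -c := by linarith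
    refine ⟨(-c)⁻¹ • l, ?_, ?_⟩
    · intro v
      have h6 := hAside v
      have h7 : l v ≤ (-c) * psiE K e v := by nlinarith
      have := mul_le_mul_of_nonneg_left h7 (le_of_lt (inv_pos.mpr hcpos))
      rw [inv_mul_cancel_left₀ (ne_of_gt hcpos)] at this
      simpa using this
    · intro x y hy
      have hmem : ((y - ybar : Y), xs (x - xbar)) ∈ B := ⟨x, y, hy, rfl, le_rfl⟩
      have h8 := hfB _ hmem
      rw [hf, hu] at h8
      have h9 : (-c) * xs (x - xbar) ≤ l (y - ybar) := by nlinarith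
      have := mul_le_mul_of_nonneg_left h9 (le_of_lt (inv_pos.mpr hcpos))
      rw [inv_mul_cancel_left₀ (ne_of_gt hcpos)] at this
      simpa using this
  · -- easy direction
    rintro ⟨ys, hys1, hys2⟩ x
    rw [show glow K e F x ybar = ⨅ y ∈ F x, ((psiE K e (y - ybar) : ℝ) : EReal) from rfl]
    refine le_iInf₂ fun y hy => ?_
    have h1 : xs (x - xbar) ≤ psiE K e (y - ybar) :=
      (hys2 x y ⟨y, hy, 0, h0K, add_zero y⟩).trans (hys1 (y - ybar))
    calc glow K e F xbar ybar + ((xs (x - xbar) : ℝ) : EReal)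
        ≤ 0 + ((xs (x - xbar) : ℝ) : EReal) := add_le_add_left hglowle _
      _ = ((xs (x - xbar) : ℝ) : EReal) := by rw [zero_add]
      _ ≤ ((psiE K e (y - ybar) : ℝ) : EReal) := by exact_mod_cast h1
end

section
/- Let F be ⪯ˡ_K-convex, let E_F(x) := F(x) + K, and let (x̄,ȳ₁), (x̄,ȳ₂) be points of the graph of E_F with ȳ₂ − ȳ₁ ∈ K. Then for every y* in the dual cone K* := {y* ∈ Y* : ⟨y*, k⟩ ≥ 0 for all k ∈ K}, one has D*E_F(x̄,ȳ₂)(y*) ⊆ D*E_F(x̄,ȳ₁)(y*), where x* ∈ D*E_F(x̄,ȳ)(y*) means ⟨x*, x − x̄⟩ ≤ ⟨y*, y − ȳ⟩ for all (x,y) with y ∈ E_F(x). -/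
open Set Topology Metric Pointwise

/-- monotonicity of the coderivative of E_F(x) = F(x) + K along the cone order,
for ⪯ˡ_K-convex F and y* in the dual cone K*. -/
theorem stmt14
    {X Y : Type*} [NormedAddCommGroup X] [NormedSpace ℝ X] [CompleteSpace X]
    [NormedAddCommGroup Y] [NormedSpace ℝ Y] [CompleteSpace Y]
    (K : Set Y) (F : X → Set Y)
    (hKcl : IsClosed K) (hKcv : Convex ℝ K)
    (hKcone : ∀ t : ℝ, 0 ≤ t → ∀ y ∈ K, t • y ∈ K)
    (hKpt : K ∩ (-K) = {0})
    (hKsolid : (interior K).Nonempty)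
    (hconv : ∀ x₁ x₂ : X, (F x₁).Nonempty → (F x₂).Nonempty → ∀ t : ℝ, t ∈ Set.Ioo (0:ℝ) 1 →
      t • F x₁ + (1 - t) • F x₂ ⊆ F (t • x₁ + (1 - t) • x₂) + K)
    (xbar : X) (ybar₁ ybar₂ : Y)
    (hy₁ : ybar₁ ∈ F xbar + K) (hy₂ : ybar₂ ∈ F xbar + K)
    (horder : ybar₂ - ybar₁ ∈ K)
    (ys : Y →L[ℝ] ℝ) (hys : ∀ k ∈ K, 0 ≤ ys k) :
    ∀ xs : X →L[ℝ] ℝ,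
      (∀ x : X, ∀ y ∈ F x + K, xs (x - xbar) ≤ ys (y - ybar₂)) →
      (∀ x : X, ∀ y ∈ F x + K, xs (x - xbar) ≤ ys (y - ybar₁)) := by
  intro xs h x y hy
  -- y + (ybar₂ - ybar₁) ∈ F x + K
  obtain ⟨a, ha, k, hk, rfl⟩ := hy
  have hK_add : ∀ u ∈ K, ∀ v ∈ K, u + v ∈ K := by
    intro u hu v hv
    have h2 : (1/2 : ℝ) • u + (1/2 : ℝ) • v ∈ K :=
      hKcv hu hv (by norm_num) (by norm_num) (by norm_num)
    have := hKcone 2 (by norm_num) _ h2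
    simpa [smul_add, smul_smul] using this
  have hy' : a + (k + (ybar₂ - ybar₁)) ∈ F x + K :=
    ⟨a, ha, k + (ybar₂ - ybar₁), hK_add _ hk _ horder, rfl⟩
  have := h x _ hy'
  have heq : a + (k + (ybar₂ - ybar₁)) - ybar₂ = a + k - ybar₁ := by abel
  rwa [heq] at this
end
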